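/- arXiv:2010.12649 — 6 statements merged into one kernel-verified Lean document; each statement's English description precedes it below -/
import Mathlib

section
/- Let G be a d-regular graph on n vertices with adjacency eigenvalues λ₁ = d ≥ λ₂ ≥ ... ≥ λₙ, with λₙ < 0. Then the independence number satisfies α(G) ≤ n / (1 - λ₁/λₙ) (the Hoffman ratio bound). -/
open Polynomial Finset

/-- The independence number of a simple graph: the maximum size of a set of
pairwise non-adjacent vertices. -/
noncomputable def SimpleGraph.indepNum' {V : Type*} [Fintype V] (G : SimpleGraph V) : ℕ :=
  sSup {m | ∃ s : Finset V, s.card = m ∧ ∀ u ∈ s, ∀ v ∈ s, ¬ G.Adj u v}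

/-- The `k`-th power of a graph: distinct vertices are adjacent iff
their distance in `G` is (finite and) at most `k`. -/
def SimpleGraph.power {V : Type*} (G : SimpleGraph V) (k : ℕ) : SimpleGraph V where
  Adj u v := u ≠ v ∧ G.Reachable u v ∧ G.dist u v ≤ k
  symm := by
    constructor
    intro u v ⟨h1, h2, h3⟩
    exact ⟨h1.symm, h2.symm, by rwa [SimpleGraph.dist_comm]⟩
  loopless := by constructor; intro u ⟨h, _⟩; exact h rfl

/-- The `k`-independence number: the maximum size of a set of vertices at
pairwise distance greater than `k`. -/
noncomputable def SimpleGraph.kIndepNum {V : Type*} [Fintype V] (G : SimpleGraph V) (k : ℕ) : ℕ :=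
  (G.power k).indepNum'

section Aux
open Matrix

/-- Any eigenvalue of a matrix is a root of its characteristic polynomial. -/
lemma aux_charpoly_eval_zero {n : ℕ} (A : Matrix (Fin n) (Fin n) ℝ) (μ : ℝ) (v : Fin n → ℝ)
    (hv : v ≠ 0) (hAv : A *ᵥ v = μ • v) : A.charpoly.eval μ = 0 := by
  have hdet : (μ • (1 : Matrix (Fin n) (Fin n) ℝ) - A).det = 0 := by
    rw [← Matrix.exists_mulVec_eq_zero_iff]
    exact ⟨v, hv, by rw [Matrix.sub_mulVec, Matrix.smul_mulVec, Matrix.one_mulVec, hAv,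
      sub_self]⟩
  have h1 : A.charpoly.eval μ = ((charmatrix A).map (Polynomial.eval μ)).det := by
    rw [Matrix.charpoly]
    exact (RingHom.map_det (Polynomial.evalRingHom μ) (charmatrix A)).symm ▸ rfl
  have h2 : (charmatrix A).map (Polynomial.eval μ) = μ • (1 : Matrix (Fin n) (Fin n) ℝ) - A := by
    ext i j
    by_cases h : i = j
    · subst h; simp [charmatrix_apply_eq]
    · simp [charmatrix_apply_ne _ _ _ h, Matrix.one_apply_ne h]
  rw [h1, h2, hdet]

end Aux

open Matrix in
/-- **Hoffman ratio bound.** If `G` is a connected `d`-regular graph (`d ≥ 1`) on `n`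
vertices with adjacency eigenvalues `λ₁ = d ≥ λ₂ ≥ ⋯ ≥ λₙ` and `λₙ < 0`, then
`α(G) ≤ n / (1 - λ₁/λₙ)`. -/
theorem hoffman_ratio_bound {n d : ℕ} (hn : 0 < n) (G : SimpleGraph (Fin n))
    [DecidableRel G.Adj] (hconn : G.Connected) (hreg : G.IsRegularOfDegree d) (hd : 1 ≤ d)
    (lam : Fin n → ℝ) (hlam : Antitone lam)
    (hchar : (G.adjMatrix ℝ).charpoly = ∏ i, (X - C (lam i)))
    (hlam1 : lam ⟨0, hn⟩ = d) (hlamn : lam ⟨n - 1, by omega⟩ < 0) :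
    (G.indepNum' : ℝ) ≤ n / (1 - lam ⟨0, hn⟩ / lam ⟨n - 1, by omega⟩) := by
  classical
  set A : Matrix (Fin n) (Fin n) ℝ := G.adjMatrix ℝ with hAdef
  set lmin : ℝ := lam ⟨n - 1, by omega⟩ with hlmin
  rw [hlam1]
  -- basic facts
  have hA : A.IsHermitian := by
    ext i j
    simp [hAdef, Matrix.conjTranspose_apply, SimpleGraph.adjMatrix_apply, G.adj_comm]
  -- every eigenvalue is ≥ lmin
  have hroot : ∀ (μ : ℝ) (v : Fin n → ℝ), v ≠ 0 → A *ᵥ v = μ • v → lmin ≤ μ := by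
    intro μ v hv hAv
    have h0 := aux_charpoly_eval_zero A μ v hv hAv
    rw [hchar] at h0
    simp only [Polynomial.eval_prod, Polynomial.eval_sub, Polynomial.eval_X,
      Polynomial.eval_C] at h0
    obtain ⟨j, -, hj⟩ := Finset.prod_eq_zero_iff.mp h0
    have hμ : μ = lam j := by linarith [sub_eq_zero.mp hj]
    rw [hμ, hlmin]
    have hjlt := j.isLt
    exact hlam (Fin.le_def.mpr (by simp only []; omega))
  -- A - lmin • 1 is positive semidefinite
  have hB : (A - lmin • (1 : Matrix (Fin n) (Fin n) ℝ)).IsHermitian := by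
    have h1 : (lmin • (1 : Matrix (Fin n) (Fin n) ℝ)).IsHermitian := by
      ext i j
      by_cases h : i = j <;> simp [Matrix.conjTranspose_apply, Matrix.one_apply, h, eq_comm]
    exact hA.sub h1
  have hPSD : (A - lmin • (1 : Matrix (Fin n) (Fin n) ℝ)).PosSemidef := by
    apply hB.posSemidef_iff_eigenvalues_nonneg.mpr
    intro k
    obtain ⟨v, hv, hBv⟩ : ∃ v : Fin n → ℝ, v ≠ 0 ∧
        (A - lmin • (1 : Matrix (Fin n) (Fin n) ℝ)) *ᵥ v = hB.eigenvalues k • v := by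
      refine ⟨⇑(hB.eigenvectorBasis k), ?_, hB.mulVec_eigenvectorBasis k⟩
      intro h
      exact hB.eigenvectorBasis.orthonormal.ne_zero k (by ext i; exact congrFun h i)
    have hAv : A *ᵥ v = (hB.eigenvalues k + lmin) • v := by
      rw [Matrix.sub_mulVec, Matrix.smul_mulVec, Matrix.one_mulVec, sub_eq_iff_eq_add]
        at hBv
      rw [hBv, add_smul]
    have := hroot _ v hv hAv
    rw [Pi.zero_apply]
    linarith
  -- get an independent set of maximal size
  obtain ⟨s, hscard, hind⟩ :
      ∃ s : Finset (Fin n), s.card = G.indepNum' ∧ ∀ u ∈ s, ∀ v ∈ s, ¬ G.Adj u v := by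
    have h0 : (0 : ℕ) ∈ {m | ∃ s : Finset (Fin n), s.card = m ∧ ∀ u ∈ s, ∀ v ∈ s, ¬ G.Adj u v} :=
      ⟨∅, by simp, by simp⟩
    have hbdd : BddAbove {m | ∃ s : Finset (Fin n), s.card = m ∧ ∀ u ∈ s, ∀ v ∈ s, ¬ G.Adj u v} :=
      ⟨n, by rintro m ⟨s, rfl, -⟩; simpa using s.card_le_univ⟩
    exact Nat.sSup_mem (Set.nonempty_of_mem h0) hbdd
  -- set up the test vector
  set α : ℝ := (s.card : ℝ) with hα
  have hα0 : 0 ≤ α := Nat.cast_nonneg _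
  have hn' : (0 : ℝ) < n := by exact_mod_cast hn
  set χ : Fin n → ℝ := fun u => if u ∈ s then 1 else 0 with hχ
  set x : Fin n → ℝ := fun u => (n : ℝ) * χ u - α with hx
  -- row and column sums of A
  have hrow : ∀ u, ∑ v, A u v = (d : ℝ) := by
    intro u
    have h := SimpleGraph.adjMatrix_mulVec_const_apply_of_regular (a := (1 : ℝ)) hreg (v := u)
    simpa [Matrix.mulVec, dotProduct, hAdef] using h
  have hsymm : ∀ u v, A u v = A v u := by
    intro u v; simp [hAdef, SimpleGraph.adjMatrix_apply, G.adj_comm]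
  -- the four basic double sums
  have hT1 : ∑ u, ∑ v, A u v * χ u * χ v = 0 := by
    refine Finset.sum_eq_zero fun u _ => Finset.sum_eq_zero fun v _ => ?_
    by_cases hu : u ∈ s
    · by_cases hv : v ∈ s
      · simp [hAdef, SimpleGraph.adjMatrix_apply, hind u hu v hv]
      · simp [hχ, hv]
    · simp [hχ, hu]
  have hchisum : ∑ u, χ u = α := by
    simp [hχ, hα]
  have hT2 : ∑ u, ∑ v, A u v * χ u = (d : ℝ) * α := by
    have h : ∀ u, ∑ v, A u v * χ u = (d : ℝ) * χ u := by
      intro u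
      rw [← Finset.sum_mul, hrow u]
    simp only [h, ← Finset.mul_sum, hchisum]
  have hT3 : ∑ u, ∑ v, A u v * χ v = (d : ℝ) * α := by
    rw [Finset.sum_comm]
    have h : ∀ v, ∑ u, A u v * χ v = (d : ℝ) * χ v := by
      intro v
      rw [← Finset.sum_mul]
      congr 1
      rw [← hrow v]
      exact Finset.sum_congr rfl fun u _ => hsymm u v
    simp only [h, ← Finset.mul_sum, hchisum]
  have hT4 : ∑ u, ∑ v, A u v = (d : ℝ) * n := by
    simp only [hrow]
    simp [mul_comm]
  -- quadratic form value
  have hQ : ∑ u, ∑ v, x u * (A u v * x v) = -((n : ℝ) * d * α ^ 2) := by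
    have expand : ∀ u v, x u * (A u v * x v)
        = (n : ℝ) ^ 2 * (A u v * χ u * χ v) - (n : ℝ) * α * (A u v * χ u)
          - (n : ℝ) * α * (A u v * χ v) + α ^ 2 * A u v := by
      intro u v; simp only [hx]; ring
    calc ∑ u, ∑ v, x u * (A u v * x v)
        = (n : ℝ) ^ 2 * (∑ u, ∑ v, A u v * χ u * χ v)
          - (n : ℝ) * α * (∑ u, ∑ v, A u v * χ u)
          - (n : ℝ) * α * (∑ u, ∑ v, A u v * χ v) + α ^ 2 * (∑ u, ∑ v, A u v) := by
          simp only [expand, Finset.sum_add_distrib, Finset.sum_sub_distrib, ← Finset.mul_sum]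
      _ = -((n : ℝ) * d * α ^ 2) := by
          rw [hT1, hT2, hT3, hT4]; ring
  -- norm value
  have hN : ∑ u, x u * x u = (n : ℝ) ^ 2 * α - (n : ℝ) * α ^ 2 := by
    have expand : ∀ u, x u * x u
        = (n : ℝ) ^ 2 * (χ u * χ u) - 2 * ((n : ℝ) * α) * χ u + α ^ 2 := by
      intro u; simp only [hx]; ring
    have hchisq : ∑ u, χ u * χ u = α := by
      simp [hχ, hα, ite_and]
    calc ∑ u, x u * x u
        = (n : ℝ) ^ 2 * (∑ u, χ u * χ u) - 2 * ((n : ℝ) * α) * (∑ u, χ u)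
          + (n : ℝ) * α ^ 2 := by
          simp only [expand, Finset.sum_add_distrib, Finset.sum_sub_distrib, ← Finset.mul_sum,
            Finset.sum_const, Finset.card_univ, Fintype.card_fin, nsmul_eq_mul]
      _ = (n : ℝ) ^ 2 * α - (n : ℝ) * α ^ 2 := by rw [hchisq, hchisum]; ring
  -- the PSD inequality
  have hineq : lmin * (∑ u, x u * x u) ≤ ∑ u, ∑ v, x u * (A u v * x v) := by
    have h0 := hPSD.dotProduct_mulVec_nonneg x
    have hdot : dotProduct (star x) ((A - lmin • (1 : Matrix (Fin n) (Fin n) ℝ)) *ᵥ x)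
        = (∑ u, ∑ v, x u * (A u v * x v)) - lmin * (∑ u, x u * x u) := by
      rw [Matrix.sub_mulVec, Matrix.smul_mulVec, Matrix.one_mulVec]
      rw [dotProduct_sub, dotProduct_smul]
      congr 1
      · simp only [dotProduct, Matrix.mulVec, dotProduct, star_trivial,
          Finset.mul_sum]
    rw [hdot] at h0
    linarith
  -- final arithmetic
  rw [hQ, hN] at hineq
  clear hQ hN hT1 hT2 hT3 hT4 hrow hsymm hchisum hroot hPSD hB hA hchar hx hχ
  clear_value x χ
  clear x χ
  clear_value A
  clear hAdef
  clear A
  have hden : (0 : ℝ) < 1 - (d : ℝ) / lmin := by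
    have hdl : (d : ℝ) / lmin < 0 :=
      div_neg_of_pos_of_neg (by exact_mod_cast Nat.lt_of_lt_of_le Nat.zero_lt_one hd) hlamn
    linarith
  have hgoalcast : (G.indepNum' : ℝ) = α := by rw [hα, hscard]
  rw [hgoalcast, le_div_iff₀ hden]
  have hkey2 : lmin * ((n : ℝ) * α - α ^ 2) ≤ -((d : ℝ) * α ^ 2) := by
    nlinarith [hineq, hn']
  have hgoal : (n : ℝ) * lmin ≤ α * (lmin - d) := by
    rcases eq_or_lt_of_le hα0 with h | h
    · nlinarith
    · nlinarith [mul_pos h (sub_pos.mpr hlamn)]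
  have hlminne : lmin ≠ 0 := ne_of_lt hlamn
  have e1 : α * (1 - (d : ℝ) / lmin) = α * (lmin - d) / lmin := by
    field_simp
    try ring
  rw [e1, div_le_iff_of_neg hlamn]
  exact hgoal
end

section
/- Let G be a regular connected graph with adjacency eigenvalues λ₁ > λ₂ ≥ ... ≥ λₙ, and suppose q'(A(G)) = A(G^k) for a polynomial q' of degree at most k with min_{i≥2} q'(λᵢ) < 0. Then the k-distance chromatic number satisfies χ_k(G) ≥ 1 - q'(λ₁)/min_{i∈[2,n]} q'(λᵢ). -/
open Polynomial Finset

section AuxRatioBound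
open Matrix

lemma aux_charpoly_eval {m : ℕ} (M : Matrix (Fin m) (Fin m) ℝ) (x : ℝ) :
    M.charpoly.eval x = (x • (1 : Matrix (Fin m) (Fin m) ℝ) - M).det := by
  rw [Matrix.charpoly, eval_det, Matrix.matPolyEquiv_charmatrix]
  congr 1
  rw [eval_sub, eval_X, eval_C, Matrix.scalar_apply]
  congr 1
  ext i j
  simp [Matrix.diagonal, Matrix.one_apply, Matrix.smul_apply]

lemma aux_eig_of_root {m : ℕ} (M : Matrix (Fin m) (Fin m) ℝ) (x : ℝ)
    (h : M.charpoly.eval x = 0) : ∃ v ≠ 0, M *ᵥ v = x • v := by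
  rw [aux_charpoly_eval, ← Matrix.exists_mulVec_eq_zero_iff] at h
  obtain ⟨v, hv, hv2⟩ := h
  refine ⟨v, hv, ?_⟩
  rw [Matrix.sub_mulVec, Matrix.smul_mulVec, Matrix.one_mulVec, sub_eq_zero] at hv2
  exact hv2.symm

lemma aux_root_of_eig {m : ℕ} (M : Matrix (Fin m) (Fin m) ℝ) (x : ℝ)
    (v : Fin m → ℝ) (hv : v ≠ 0) (h : M *ᵥ v = x • v) : M.charpoly.eval x = 0 := by
  rw [aux_charpoly_eval, ← Matrix.exists_mulVec_eq_zero_iff]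
  exact ⟨v, hv, by rw [Matrix.sub_mulVec, Matrix.smul_mulVec, Matrix.one_mulVec, h, sub_self]⟩

lemma aux_aeval_mulVec {m : ℕ} (A : Matrix (Fin m) (Fin m) ℝ) (x : Fin m → ℝ) (r : ℝ)
    (h : A *ᵥ x = r • x) (p : ℝ[X]) : (aeval A p) *ᵥ x = p.eval r • x := by
  induction p using Polynomial.induction_on' with
  | add p q hp hq => rw [map_add, Matrix.add_mulVec, hp, hq, eval_add, add_smul]
  | monomial j a =>
    have hpow : ∀ j : ℕ, (A ^ j) *ᵥ x = r ^ j • x := by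
      intro j; induction j with
      | zero => simp
      | succ j ih =>
        rw [pow_succ, ← Matrix.mulVec_mulVec, h, Matrix.mulVec_smul, ih, smul_smul,
          pow_succ, mul_comm]
    rw [aeval_monomial, eval_monomial, ← Matrix.mulVec_mulVec, hpow,
      Algebra.algebraMap_eq_smul_one, Matrix.smul_mulVec, Matrix.one_mulVec,
      smul_smul, mul_smul, smul_smul]

lemma aux_aeval_conj {m : ℕ} (U B : Matrix (Fin m) (Fin m) ℝ)
    (hU : U * star U = 1) (hU' : star U * U = 1) (p : ℝ[X]) :
    aeval (U * B * star U) p = U * (aeval B p) * star U := by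
  induction p using Polynomial.induction_on' with
  | add p q hp hq => rw [map_add, map_add, hp, hq]; noncomm_ring
  | monomial j a =>
    have hpow : ∀ j : ℕ, (U * B * star U) ^ j = U * B ^ j * star U := by
      intro j; induction j with
      | zero => simp [hU]
      | succ j ih =>
        rw [pow_succ, ih, pow_succ]
        calc U * B ^ j * star U * (U * B * star U)
            = U * B ^ j * (star U * U) * B * star U := by noncomm_ring
          _ = U * (B ^ j * B) * star U := by rw [hU']; noncomm_ring
    rw [aeval_monomial, aeval_monomial, hpow, Algebra.algebraMap_eq_smul_one,
      smul_one_mul, smul_one_mul]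
    simp [Matrix.smul_mul, Matrix.mul_smul]

lemma aux_aeval_diagonal {m : ℕ} (f : Fin m → ℝ) (p : ℝ[X]) :
    aeval (Matrix.diagonal f) p = Matrix.diagonal (fun i => p.eval (f i)) := by
  induction p using Polynomial.induction_on' with
  | add p q hp hq =>
    rw [map_add, hp, hq, Matrix.diagonal_add]
    funext i; simp
  | monomial j a =>
    rw [aeval_monomial, Algebra.algebraMap_eq_smul_one, smul_one_mul,
      Matrix.diagonal_pow]
    ext i j
    by_cases hij : i = j <;> simp [hij, Matrix.diagonal_apply, eval_monomial]

lemma aux_smul_one_diag {m : ℕ} (μ : ℝ) :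
    μ • (1 : Matrix (Fin m) (Fin m) ℝ) = Matrix.diagonal (fun _ => μ) := by
  ext i j
  by_cases hij : i = j <;> simp [hij, Matrix.one_apply, Matrix.diagonal_apply]

lemma aux_quadratic_bound {m : ℕ} (A : Matrix (Fin m) (Fin m) ℝ) (hA : A.IsHermitian)
    (p : ℝ[X]) (μ : ℝ) (hμ : ∀ i, μ ≤ p.eval (hA.eigenvalues i)) (z : Fin m → ℝ) :
    μ * (z ⬝ᵥ z) ≤ z ⬝ᵥ ((aeval A p) *ᵥ z) := by
  set U : Matrix (Fin m) (Fin m) ℝ := (hA.eigenvectorUnitary : Matrix (Fin m) (Fin m) ℝ) with hUdef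
  have hU : U * star U = 1 := Matrix.mem_unitaryGroup_iff.mp hA.eigenvectorUnitary.2
  have hU' : star U * U = 1 := Matrix.mem_unitaryGroup_iff'.mp hA.eigenvectorUnitary.2
  have hspec : A = U * Matrix.diagonal hA.eigenvalues * star U := by
    have h := hA.spectral_theorem
    simpa [RCLike.ofReal_real_eq_id] using h
  have hM := aux_aeval_conj U (Matrix.diagonal hA.eigenvalues) hU hU' p
  rw [aux_aeval_diagonal, ← hspec] at hM
  have hsub : aeval A p - μ • 1 =
      U * Matrix.diagonal (fun i => p.eval (hA.eigenvalues i) - μ) * star U := by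
    rw [hM]
    have h1 : (μ • (1 : Matrix (Fin m) (Fin m) ℝ)) = U * (Matrix.diagonal fun _ => μ) * star U := by
      rw [← aux_smul_one_diag, Matrix.mul_smul, Matrix.smul_mul, Matrix.mul_one, hU]
    rw [h1, ← Matrix.diagonal_sub]
    noncomm_ring
  have hpsd : (aeval A p - μ • 1).PosSemidef := by
    rw [hsub]
    have hd : (Matrix.diagonal (fun i => p.eval (hA.eigenvalues i) - μ)).PosSemidef :=
      Matrix.PosSemidef.diagonal (fun i => by simpa using hμ i)
    simpa [Matrix.star_eq_conjTranspose] using hd.mul_mul_conjTranspose_same U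
  have h0 := hpsd.dotProduct_mulVec_nonneg z
  have hz : star z = z := by funext i; simp
  rw [hz, Matrix.sub_mulVec, Matrix.smul_mulVec, Matrix.one_mulVec,
    dotProduct_sub, dotProduct_smul] at h0
  simp only [smul_eq_mul] at h0 ⊢
  linarith [h0]

end AuxRatioBound

open Matrix in
/-- If `G` is a connected regular graph with eigenvalues `λ₁ > λ₂ ≥ ⋯ ≥ λₙ` and
`q'` is a polynomial of degree at most `k` with `q'(A(G)) = A(G^k)` and
`min_{i ≥ 2} q'(λᵢ) < 0`, then `χ_k(G) ≥ 1 - q'(λ₁) / min_{i∈[2,n]} q'(λᵢ)`. -/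
theorem ratio_bound_chromatic_power {n d k : ℕ} (hn : 0 < n) (hk : 1 ≤ k)
    (G : SimpleGraph (Fin n)) [DecidableRel G.Adj] [DecidableRel (G.power k).Adj]
    (hconn : G.Connected) (hreg : G.IsRegularOfDegree d)
    (lam : Fin n → ℝ) (hlam : Antitone lam)
    (hgap : ∀ i, i ≠ ⟨0, hn⟩ → lam i < lam ⟨0, hn⟩)
    (hchar : (G.adjMatrix ℝ).charpoly = ∏ i, (X - C (lam i)))
    (q' : Polynomial ℝ) (hq' : q'.natDegree ≤ k)
    (hq'A : aeval (G.adjMatrix ℝ) q' = (G.power k).adjMatrix ℝ)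
    (μ : ℝ) (hμ : IsLeast {x | ∃ i, i ≠ ⟨0, hn⟩ ∧ x = q'.eval (lam i)} μ) (hμneg : μ < 0)
    (c : ℕ) (hc : (G.power k).chromaticNumber = c) :
    1 - q'.eval (lam ⟨0, hn⟩) / μ ≤ (c : ℝ) := by
  classical
  set i0 : Fin n := ⟨0, hn⟩ with hi0
  set A : Matrix (Fin n) (Fin n) ℝ := G.adjMatrix ℝ with hA_def
  set M : Matrix (Fin n) (Fin n) ℝ := (G.power k).adjMatrix ℝ with hM_def
  set D : ℝ := q'.eval (lam i0) with hD_def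
  have hAH : A.IsHermitian := by
    ext i j
    simp [hA_def, Matrix.conjTranspose_apply, SimpleGraph.adjMatrix_apply, SimpleGraph.adj_comm]
  -- roots of the characteristic polynomial
  have hlamroot : ∀ j : Fin n, A.charpoly.eval (lam j) = 0 := by
    intro j
    rw [hchar, eval_prod]
    exact Finset.prod_eq_zero (Finset.mem_univ j) (by simp)
  have hrootlam : ∀ x : ℝ, A.charpoly.eval x = 0 → ∃ j, x = lam j := by
    intro x hx
    rw [hchar, eval_prod] at hx
    obtain ⟨j, -, hj⟩ := Finset.prod_eq_zero_iff.mp hx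
    exact ⟨j, by simpa [sub_eq_zero] using hj⟩
  -- the all-ones vector
  set ones : Fin n → ℝ := fun _ => 1 with hones
  have hones_ne : ones ≠ 0 := by
    intro h
    exact one_ne_zero (congrFun h i0)
  have hAone : A *ᵥ ones = (d : ℝ) • ones := by
    funext v
    rw [hA_def, SimpleGraph.adjMatrix_mulVec_apply]
    simp [hones, hreg v]
  -- d equals lam i0
  have hd_le : (d : ℝ) ≤ lam i0 := by
    obtain ⟨j, hj⟩ := hrootlam _ (aux_root_of_eig A _ ones hones_ne hAone)
    rw [hj]
    exact hlam (by simp [hi0, Fin.le_def])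
  have hle_d : lam i0 ≤ (d : ℝ) := by
    obtain ⟨v, hv0, hv⟩ := aux_eig_of_root A (lam i0) (hlamroot i0)
    obtain ⟨i, -, hi⟩ := Finset.exists_max_image Finset.univ (fun j => |v j|) ⟨i0, Finset.mem_univ _⟩
    have hvi_pos : 0 < |v i| := by
      obtain ⟨w, hw⟩ := Function.ne_iff.mp hv0
      exact lt_of_lt_of_le (abs_pos.mpr hw) (hi w (Finset.mem_univ w))
    have hrow : ∑ j, A i j = (d : ℝ) := by
      have := congrFun hAone i
      simpa [Matrix.mulVec, dotProduct, hones] using this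
    have hentry : ∀ i' j : Fin n, 0 ≤ A i' j := by
      intro i' j
      simp only [hA_def, SimpleGraph.adjMatrix_apply]
      split <;> norm_num
    have hAvi : (A *ᵥ v) i = lam i0 * v i := by rw [hv]; simp
    have habs : |lam i0| * |v i| ≤ (d : ℝ) * |v i| := by
      have h1 : |lam i0 * v i| = |(A *ᵥ v) i| := by rw [hAvi]
      have h2 : |(A *ᵥ v) i| ≤ ∑ j, A i j * |v j| := by
        rw [Matrix.mulVec, dotProduct]
        refine le_trans (Finset.abs_sum_le_sum_abs _ _) ?_
        refine Finset.sum_le_sum fun j _ => ?_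
        rw [abs_mul, abs_of_nonneg (hentry i j)]
      have h3 : ∑ j, A i j * |v j| ≤ ∑ j, A i j * |v i| :=
        Finset.sum_le_sum fun j _ => mul_le_mul_of_nonneg_left (hi j (Finset.mem_univ j)) (hentry i j)
      have h4 : ∑ j, A i j * |v i| = (d : ℝ) * |v i| := by rw [← Finset.sum_mul, hrow]
      calc |lam i0| * |v i| = |lam i0 * v i| := (abs_mul _ _).symm
        _ = |(A *ᵥ v) i| := h1
        _ ≤ ∑ j, A i j * |v j| := h2
        _ ≤ ∑ j, A i j * |v i| := h3
        _ = (d : ℝ) * |v i| := h4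
    have := le_of_mul_le_mul_right habs hvi_pos
    exact le_trans (le_abs_self _) this
  have hdlam : (d : ℝ) = lam i0 := le_antisymm hd_le hle_d
  -- M acts on the ones vector
  have hMone : M *ᵥ ones = D • ones := by
    rw [← hq'A, aux_aeval_mulVec A ones d hAone q', hdlam]
  have hMentry : ∀ u v : Fin n, 0 ≤ M u v := by
    intro u v
    simp only [hM_def, SimpleGraph.adjMatrix_apply]
    split <;> norm_num
  have hD0 : 0 ≤ D := by
    have := congrFun hMone i0
    simp only [Pi.smul_apply, hones, smul_eq_mul, mul_one] at this
    rw [← this]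
    rw [Matrix.mulVec, dotProduct]
    exact Finset.sum_nonneg fun j _ => by simpa [hones] using hMentry i0 j
  -- quadratic form bound
  have hquad : ∀ z : Fin n → ℝ, μ * (dotProduct z z) ≤ dotProduct z (M *ᵥ z) := by
    intro z
    rw [← hq'A]
    refine aux_quadratic_bound A hAH q' μ (fun i => ?_) z
    have hvec := hAH.mulVec_eigenvectorBasis i
    have hne : (⇑(hAH.eigenvectorBasis i) : Fin n → ℝ) ≠ 0 := by
      intro h
      exact hAH.eigenvectorBasis.orthonormal.ne_zero i (by ext j; exact congrFun h j)
    obtain ⟨j, hj⟩ := hrootlam _ (aux_root_of_eig A _ _ hne hvec)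
    rw [hj]
    rcases eq_or_ne j i0 with rfl | hji
    · rw [← hD_def]; linarith
    · exact hμ.2 ⟨j, hji, rfl⟩
  -- the coloring
  have hcol : (G.power k).Colorable c :=
    (SimpleGraph.chromaticNumber_le_iff_colorable).mp (le_of_eq hc)
  obtain ⟨C⟩ := hcol
  have hc1 : 1 ≤ c := by
    rcases Nat.eq_zero_or_pos c with rfl | h
    · exact (C i0).elim0
    · exact h
  -- indicator vectors
  set χ : Fin c → Fin n → ℝ := fun t v => if C v = t then 1 else 0 with hχ
  set nt : Fin c → ℝ := fun t => ∑ v, χ t v with hnt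
  have hnt_sum : ∑ t, nt t = (n : ℝ) := by
    rw [hnt]
    simp only
    rw [Finset.sum_comm]
    have : ∀ v : Fin n, ∑ t, χ t v = 1 := by
      intro v
      simp [hχ]
    rw [Finset.sum_congr rfl fun v _ => this v]
    simp
  have hxx : dotProduct ones ones = (n : ℝ) := by
    simp [dotProduct, hones]
  have hxχ : ∀ t, dotProduct ones (χ t) = nt t := by
    intro t; simp [dotProduct, hones, hnt]
  have hχx : ∀ t, dotProduct (χ t) ones = nt t := by
    intro t; simp [dotProduct, hones, hnt]
  have hχχ : ∀ t, dotProduct (χ t) (χ t) = nt t := by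
    intro t
    rw [dotProduct, hnt]
    refine Finset.sum_congr rfl fun v _ => ?_
    by_cases h : C v = t <;> simp [hχ, h]
  have hsym : ∀ u w : Fin n → ℝ, dotProduct u (M *ᵥ w) = dotProduct (M *ᵥ u) w := by
    intro u w
    rw [Matrix.dotProduct_mulVec, ← Matrix.mulVec_transpose, hM_def,
      SimpleGraph.transpose_adjMatrix]
  have hχMχ : ∀ t, dotProduct (χ t) (M *ᵥ χ t) = 0 := by
    intro t
    rw [dotProduct]
    refine Finset.sum_eq_zero fun u _ => ?_
    rcases eq_or_ne (C u) t with hu | hu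
    · have hinner : (M *ᵥ χ t) u = 0 := by
        rw [Matrix.mulVec, dotProduct]
        refine Finset.sum_eq_zero fun v _ => ?_
        rcases eq_or_ne (C v) t with hv | hv
        · have hMuv : M u v = 0 := by
            simp only [hM_def, SimpleGraph.adjMatrix_apply, ite_eq_right_iff]
            intro hadj
            exact absurd (hu.trans hv.symm) (C.valid hadj)
          rw [hMuv, zero_mul]
        · simp [hχ, hv]
      rw [hinner, mul_zero]
    · simp [hχ, hu]
  have hxMχ : ∀ t, dotProduct ones (M *ᵥ χ t) = D * nt t := by
    intro t
    rw [hsym, hMone, smul_dotProduct, hxχ, smul_eq_mul]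
  have hχMx : ∀ t, dotProduct (χ t) (M *ᵥ ones) = D * nt t := by
    intro t
    rw [hMone, dotProduct_smul, hχx, smul_eq_mul]
  have hxMx : dotProduct ones (M *ᵥ ones) = D * (n : ℝ) := by
    rw [hMone, dotProduct_smul, hxx, smul_eq_mul]
  -- the per-colour inequality
  have hineq : ∀ t : Fin c,
      μ * (n : ℝ) + (μ * (c : ℝ) ^ 2 - 2 * μ * (c : ℝ) + 2 * (c : ℝ) * D) * nt t
        ≤ D * (n : ℝ) := by
    intro t
    have h := hquad (ones - (c : ℝ) • χ t)
    simp only [Matrix.mulVec_sub, Matrix.mulVec_smul, sub_dotProduct,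
      dotProduct_sub, smul_dotProduct, dotProduct_smul,
      smul_eq_mul] at h
    rw [hxx, hxχ, hχx, hχχ, hxMx, hxMχ, hχMx, hχMχ] at h
    nlinarith [h]
  have hsum := Finset.sum_le_sum (fun t (_ : t ∈ Finset.univ) => hineq t)
  rw [Finset.sum_add_distrib, Finset.sum_const, Finset.sum_const, ← Finset.mul_sum,
    hnt_sum, Finset.card_univ, Fintype.card_fin] at hsum
  simp only [nsmul_eq_mul] at hsum
  -- extract the key inequality
  have hn' : (0 : ℝ) < n := by exact_mod_cast hn
  have hc' : (0 : ℝ) < c := by exact_mod_cast hc1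
  have hkey : μ * ((c : ℝ) - 1) ≤ -D := by
    nlinarith [hsum, mul_pos hc' hn']
  have hgoal : D ≤ (1 - (c : ℝ)) * μ := by nlinarith [hkey]
  have : (1 : ℝ) - (c : ℝ) ≤ D / μ := by
    rw [le_div_iff_of_neg hμneg]
    linarith [hgoal]
  linarith [this]
end

section
/- Let G be a graph with n vertices and adjacency matrix A with eigenvalues λ₁ ≥ ... ≥ λₙ. For any real polynomial p of degree at most k, with W(p) = max_u (p(A))_{uu} and w(p) = min_u (p(A))_{uu}, the k-independence number satisfies α_k(G) ≤ min{ |{i : p(λᵢ) ≥ w(p)}| , |{i : p(λᵢ) ≤ W(p)}| }. -/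
open Polynomial Finset

namespace InertialAux

open Matrix

lemma sum_dotProduct' {n : ℕ} {ι : Type*} (s : Finset ι) (f : ι → (Fin n → ℝ)) (w : Fin n → ℝ) :
    (∑ i ∈ s, f i) ⬝ᵥ w = ∑ i ∈ s, f i ⬝ᵥ w := by
  simp only [dotProduct, Finset.sum_apply, Finset.sum_mul]
  exact Finset.sum_comm

lemma dotProduct_sum' {n : ℕ} {ι : Type*} (s : Finset ι) (v : Fin n → ℝ) (f : ι → (Fin n → ℝ)) :
    v ⬝ᵥ (∑ i ∈ s, f i) = ∑ i ∈ s, v ⬝ᵥ f i := by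
  simp only [dotProduct, Finset.sum_apply, Finset.mul_sum]
  exact Finset.sum_comm

lemma li_of_dot {n : ℕ} {ι : Type*} [Fintype ι] [DecidableEq ι] (B : ι → (Fin n → ℝ))
    (horth : ∀ i j, B i ⬝ᵥ B j = if i = j then 1 else 0) :
    LinearIndependent ℝ B := by
  rw [Fintype.linearIndependent_iff]
  intro g hg j
  have h := congrArg (fun v => v ⬝ᵥ B j) hg
  simp only [sum_dotProduct', smul_dotProduct, horth, zero_dotProduct,
    smul_eq_mul, mul_ite, mul_one, mul_zero, Finset.sum_ite_eq', Finset.mem_univ,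
    if_true] at h
  exact h

lemma dot_orth_sum {n : ℕ} {ι : Type*} [Fintype ι] [DecidableEq ι] {B : ι → (Fin n → ℝ)}
    (horth : ∀ i j, B i ⬝ᵥ B j = if i = j then 1 else 0) (g h : ι → ℝ) :
    (∑ i, g i • B i) ⬝ᵥ (∑ j, h j • B j) = ∑ i, g i * h i := by
  rw [sum_dotProduct']
  refine Finset.sum_congr rfl fun i _ => ?_
  rw [smul_dotProduct, dotProduct_sum', smul_eq_mul]
  congr 1
  have hj : ∀ j, B i ⬝ᵥ (h j • B j) = if j = i then h i else 0 := by
    intro j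
    rw [dotProduct_smul, horth, smul_eq_mul]
    by_cases hji : j = i
    · simp [hji]
    · simp [hji, if_neg (mt Eq.symm hji)]
  simp [hj]

lemma core_bound {n : ℕ} (M : Matrix (Fin n) (Fin n) ℝ) (c : Fin n → ℝ)
    (B : Fin n → (Fin n → ℝ))
    (horth : ∀ i j, B i ⬝ᵥ B j = if i = j then 1 else 0)
    (heig : ∀ i, M.mulVec (B i) = c i • B i)
    (s : Finset (Fin n)) (w : ℝ)
    (hdiag : ∀ u, w ≤ M u u)
    (hoff : ∀ u ∈ s, ∀ v ∈ s, u ≠ v → M u v = 0) :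
    s.card ≤ (univ.filter fun i => w ≤ c i).card := by
  by_contra hcon
  push_neg at hcon
  set T : Finset (Fin n) := univ.filter fun i => ¬ w ≤ c i with hT
  have hcards : (univ.filter fun i => w ≤ c i).card + T.card = n := by
    rw [hT, Finset.card_filter_add_card_filter_not, Finset.card_univ, Fintype.card_fin]
  set U : Submodule ℝ (Fin n → ℝ) :=
    Submodule.span ℝ (Set.range fun u : {u // u ∈ s} => Pi.single (u : Fin n) (1 : ℝ)) with hU
  set V : Submodule ℝ (Fin n → ℝ) :=
    Submodule.span ℝ (Set.range fun i : {i // i ∈ T} => B i) with hV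
  have horthS : ∀ i j : {u // u ∈ s},
      (Pi.single (i : Fin n) (1:ℝ)) ⬝ᵥ (Pi.single (j : Fin n) (1:ℝ)) = if i = j then 1 else 0 := by
    intro i j
    rw [single_dotProduct, one_mul, Pi.single_apply]
    by_cases hij : i = j
    · simp [hij]
    · rw [if_neg hij]; exact if_neg (fun h => hij (Subtype.ext h))
  have horthT : ∀ i j : {i // i ∈ T}, B i ⬝ᵥ B j = if i = j then 1 else 0 := by
    intro i j
    rw [horth]
    by_cases hij : i = j
    · simp [hij]
    · rw [if_neg hij]; exact if_neg (fun h => hij (Subtype.ext h))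
  have hfU : Module.finrank ℝ U = s.card := by
    rw [hU, finrank_span_eq_card (li_of_dot _ horthS), Fintype.card_coe]
  have hfV : Module.finrank ℝ V = T.card := by
    rw [hV, finrank_span_eq_card (li_of_dot _ horthT), Fintype.card_coe]
  have hsum := Submodule.finrank_sup_add_finrank_inf_eq U V
  have hle : Module.finrank ℝ ↥(U ⊔ V) ≤ n := by
    have := Submodule.finrank_le (U ⊔ V)
    simpa using this
  have hpos : 0 < Module.finrank ℝ ↥(U ⊓ V) := by omega
  obtain ⟨⟨x, hxUV⟩, hxne⟩ := Module.finrank_pos_iff_exists_ne_zero.mp hpos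
  have hxU : x ∈ U := hxUV.1
  have hxV : x ∈ V := hxUV.2
  have hx0 : x ≠ 0 := by simpa [Submodule.mk_eq_zero] using hxne
  have hsupp : ∀ u, u ∉ s → x u = 0 := by
    have hKle : U ≤
        { carrier := {y : Fin n → ℝ | ∀ u, u ∉ s → y u = 0}
          add_mem' := fun ha hb u hu => by simp [ha u hu, hb u hu]
          zero_mem' := fun u _ => rfl
          smul_mem' := fun a y hy u hu => by simp [hy u hu] } := by
      rw [hU, Submodule.span_le]
      rintro _ ⟨u, rfl⟩ v hv
      exact Pi.single_eq_of_ne (fun hvu => hv (by rw [hvu]; exact u.2)) 1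
    exact hKle hxU
  have hxx : x ⬝ᵥ x = ∑ u, x u ^ 2 := by
    simp [dotProduct, sq]
  have hlow : w * (x ⬝ᵥ x) ≤ x ⬝ᵥ M.mulVec x := by
    have h1 : x ⬝ᵥ M.mulVec x = ∑ u, M u u * x u ^ 2 := by
      simp only [dotProduct, mulVec]
      refine Finset.sum_congr rfl fun u _ => ?_
      by_cases hxu : x u = 0
      · simp [hxu]
      · have hus : u ∈ s := by by_contra hus; exact hxu (hsupp u hus)
        have hinner : ∑ v, M u v * x v = M u u * x u := by
          refine Finset.sum_eq_single u (fun v _ hvu => ?_) (fun h => absurd (Finset.mem_univ u) h)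
          by_cases hvs : v ∈ s
          · rw [hoff u hus v hvs (Ne.symm hvu), zero_mul]
          · rw [hsupp v hvs, mul_zero]
        rw [hinner]; ring
    rw [h1, hxx, Finset.mul_sum]
    exact Finset.sum_le_sum fun u _ => mul_le_mul_of_nonneg_right (hdiag u) (sq_nonneg _)
  have hxV' : x ∈ Submodule.span ℝ (Set.range fun i : {i // i ∈ T} => B i) := hxV
  rw [Submodule.mem_span_range_iff_exists_fun] at hxV'
  obtain ⟨g, hg⟩ := hxV'
  obtain ⟨i0, hi0⟩ : ∃ i0, g i0 ≠ 0 := by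
    by_contra hall
    push_neg at hall
    exact hx0 (by rw [← hg]; simp [hall])
  have hclt : ∀ i : {i // i ∈ T}, c i < w := by
    intro i
    have h2 : (i : Fin n) ∈ Finset.filter (fun i => ¬ w ≤ c i) univ := i.2
    exact lt_of_not_ge (Finset.mem_filter.mp h2).2
  have hMx : M.mulVec x = ∑ i : {i // i ∈ T}, (g i * c i) • B i := by
    rw [← hg, ← M.mulVecLin_apply, map_sum]
    refine Finset.sum_congr rfl fun i _ => ?_
    rw [_root_.map_smul, M.mulVecLin_apply, heig, smul_smul]
  have hQup : x ⬝ᵥ M.mulVec x = ∑ i : {i // i ∈ T}, g i * (g i * c i) := by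
    rw [hMx, ← hg]
    exact dot_orth_sum horthT g _
  have hxx2 : x ⬝ᵥ x = ∑ i : {i // i ∈ T}, g i * g i := by
    rw [← hg]
    exact dot_orth_sum horthT g g
  have hstrict : x ⬝ᵥ M.mulVec x < w * (x ⬝ᵥ x) := by
    rw [hQup, hxx2, Finset.mul_sum]
    refine Finset.sum_lt_sum (fun i _ => ?_) ⟨i0, Finset.mem_univ i0, ?_⟩
    · nlinarith [sq_nonneg (g i), (hclt i).le, sq_abs (g i)]
    · have hp : 0 < g i0 * g i0 := mul_self_pos.mpr hi0
      nlinarith [hclt i0]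
  exact absurd (lt_of_le_of_lt hlow hstrict) (lt_irrefl _)

lemma aeval_mulVec_eig {n : ℕ} (A : Matrix (Fin n) (Fin n) ℝ) (p : ℝ[X]) (v : Fin n → ℝ) (μ : ℝ)
    (hv : A.mulVec v = μ • v) : (aeval A p).mulVec v = p.eval μ • v := by
  have hpow : ∀ m : ℕ, (A ^ m).mulVec v = μ ^ m • v := by
    intro m
    induction m with
    | zero => simp
    | succ m ih =>
        rw [pow_succ, ← mulVec_mulVec, hv, mulVec_smul, ih, smul_smul, pow_succ]
        ring_nf
  induction p using Polynomial.induction_on' with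
  | add f g hf hg => rw [map_add, add_mulVec, hf, hg, eval_add, add_smul]
  | monomial m a =>
      rw [aeval_monomial, ← Algebra.smul_def, smul_mulVec, hpow, smul_smul,
        eval_monomial]

lemma charpoly_diagonal' {m : ℕ} (d : Fin m → ℝ) :
    (Matrix.diagonal d).charpoly = ∏ i, (X - C (d i)) := by
  rw [Matrix.charpoly]
  have h : charmatrix (diagonal d) = diagonal (fun i => X - C (d i)) := by
    ext i j : 2
    by_cases hij : i = j
    · subst hij; simp [charmatrix_apply_eq]
    · simp [charmatrix_apply_ne _ _ _ hij, hij]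
  rw [h, det_diagonal]

lemma charmatrix_eq {m : ℕ} (M : Matrix (Fin m) (Fin m) ℝ) :
    charmatrix M = Matrix.diagonal (fun _ => (X : ℝ[X])) - M.map C := by
  ext i j : 2
  rw [charmatrix_apply, Matrix.sub_apply, Matrix.map_apply]

lemma charpoly_conj {m : ℕ} (U V D : Matrix (Fin m) (Fin m) ℝ)
    (hUV : U * V = 1) (hVU : V * U = 1) :
    (U * D * V).charpoly = D.charpoly := by
  have hdiagcomm : ∀ (N : Matrix (Fin m) (Fin m) ℝ[X]),
      N * Matrix.diagonal (fun _ => (X : ℝ[X])) = Matrix.diagonal (fun _ => (X : ℝ[X])) * N := by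
    intro N
    ext i j
    rw [Matrix.mul_apply, Matrix.mul_apply]
    simp [Matrix.diagonal_apply, mul_comm]
  have hmap : ∀ (P Q : Matrix (Fin m) (Fin m) ℝ),
      (P * Q).map (C : ℝ →+* ℝ[X]) = P.map C * Q.map C := by
    intro P Q
    exact Matrix.map_mul
  have hone : (1 : Matrix (Fin m) (Fin m) ℝ).map (C : ℝ →+* ℝ[X]) = 1 := by
    ext i j; by_cases hij : i = j <;> simp [hij, Matrix.one_apply]
  have key : charmatrix (U * D * V) = U.map C * charmatrix D * V.map C := by
    rw [charmatrix_eq, charmatrix_eq, Matrix.mul_sub, Matrix.sub_mul, ← hmap, ← hmap]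
    congr 1
    rw [hdiagcomm (U.map (C : ℝ →+* ℝ[X])), Matrix.mul_assoc, ← hmap, hUV]
    rw [hone, Matrix.mul_one]
  rw [Matrix.charpoly, Matrix.charpoly, key, Matrix.det_mul, Matrix.det_mul, mul_comm,
    ← mul_assoc, ← Matrix.det_mul, ← hmap, hVU]
  rw [hone, Matrix.det_one, one_mul]

variable {n k : ℕ} (G : SimpleGraph (Fin n)) [DecidableRel G.Adj]

lemma adjHerm : (G.adjMatrix ℝ).IsHermitian := by
  rw [Matrix.IsHermitian, conjTranspose_eq_transpose_of_trivial]
  exact G.isSymm_adjMatrix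

lemma eigBasis_dot (hA : (G.adjMatrix ℝ).IsHermitian) (i j : Fin n) :
    ⇑(hA.eigenvectorBasis i) ⬝ᵥ ⇑(hA.eigenvectorBasis j) = if i = j then 1 else 0 := by
  have horth := hA.eigenvectorBasis.orthonormal
  rw [orthonormal_iff_ite] at horth
  have := horth i j
  rw [← this]
  simp [dotProduct, PiLp.inner_apply, RCLike.inner_apply, mul_comm]

lemma charpoly_eq_prod_eig (hA : (G.adjMatrix ℝ).IsHermitian) :
    (G.adjMatrix ℝ).charpoly = ∏ i, (X - C (hA.eigenvalues i)) := by
  have hU1 : (hA.eigenvectorUnitary : Matrix (Fin n) (Fin n) ℝ)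
      * (star hA.eigenvectorUnitary : Matrix (Fin n) (Fin n) ℝ) = 1 := by
    exact_mod_cast (Matrix.mem_unitaryGroup_iff).mp hA.eigenvectorUnitary.2
  have hU2 : (star hA.eigenvectorUnitary : Matrix (Fin n) (Fin n) ℝ)
      * (hA.eigenvectorUnitary : Matrix (Fin n) (Fin n) ℝ) = 1 := by
    exact_mod_cast (Matrix.mem_unitaryGroup_iff').mp hA.eigenvectorUnitary.2
  have hdiag : Matrix.diagonal (RCLike.ofReal ∘ hA.eigenvalues)
      = Matrix.diagonal hA.eigenvalues := by congr 1
  calc (G.adjMatrix ℝ).charpoly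
      = ((hA.eigenvectorUnitary : Matrix (Fin n) (Fin n) ℝ) * Matrix.diagonal hA.eigenvalues
          * (star hA.eigenvectorUnitary : Matrix (Fin n) (Fin n) ℝ)).charpoly := by
        conv_lhs => rw [hA.spectral_theorem]
        rw [hdiag]
        rfl
    _ = (Matrix.diagonal hA.eigenvalues).charpoly := charpoly_conj _ _ _ hU1 hU2
    _ = ∏ i, (X - C (hA.eigenvalues i)) := charpoly_diagonal' _

lemma offdiag_zero (p : ℝ[X]) (hp : p.natDegree ≤ k) (u v : Fin n)
    (huv : u ≠ v) (hnadj : ¬ (u ≠ v ∧ G.Reachable u v ∧ G.dist u v ≤ k)) :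
    (aeval (G.adjMatrix ℝ) p) u v = 0 := by
  have hzero : ∀ i, i ≤ k → ((G.adjMatrix ℝ) ^ i) u v = 0 := by
    intro i hi
    rw [SimpleGraph.adjMatrix_pow_apply_eq_card_walk]
    rw [Nat.cast_eq_zero, Fintype.card_eq_zero_iff]
    constructor
    rintro ⟨q, hq⟩
    exact hnadj ⟨huv, ⟨q⟩, le_trans (hq ▸ SimpleGraph.dist_le q) hi⟩
  rw [Polynomial.aeval_eq_sum_range, Matrix.sum_apply]
  refine Finset.sum_eq_zero fun i hi => ?_
  rw [Matrix.smul_apply, hzero i (le_trans (Nat.lt_succ_iff.mp (Finset.mem_range.mp hi)) hp),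
    smul_zero]

lemma count_eq_of_prod_eq (f g : Fin n → ℝ)
    (hfg : ∏ i, (X - C (f i)) = ∏ i, (X - C (g i))) (q : ℝ → Prop) [DecidablePred q] :
    (univ.filter fun i => q (f i)).card = (univ.filter fun i => q (g i)).card := by
  have hmult : Multiset.map f univ.val = Multiset.map g univ.val := by
    have h1 := Polynomial.roots_multiset_prod_X_sub_C (Multiset.map f univ.val)
    have h2 := Polynomial.roots_multiset_prod_X_sub_C (Multiset.map g univ.val)
    rw [Multiset.map_map] at h1 h2
    have hp1 : ∏ i, (X - C (f i)) = (Multiset.map ((fun a => X - C a) ∘ f) univ.val).prod :=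
      Finset.prod_eq_multiset_prod _ _
    have hp2 : ∏ i, (X - C (g i)) = (Multiset.map ((fun a => X - C a) ∘ g) univ.val).prod :=
      Finset.prod_eq_multiset_prod _ _
    rw [← h1, ← h2, ← hp1, ← hp2, hfg]
  have key : ∀ f : Fin n → ℝ, (univ.filter fun i => q (f i)).card
      = Multiset.countP q (Multiset.map f univ.val) := by
    intro f
    rw [Multiset.countP_map]
    rfl
  rw [key, key, hmult]

end InertialAux

/-- **Inertial-type bound for `α_k` (Abiad–Coutinho–Fiol).** For any graph `G` and any
polynomial `p` of degree at most `k`, with `W(p)` and `w(p)` the maximum and minimum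
diagonal entries of `p(A)`,
`α_k(G) ≤ min{ #{i : p(λᵢ) ≥ w(p)}, #{i : p(λᵢ) ≤ W(p)} }`. -/
theorem inertial_type_bound_alpha_k {n k : ℕ} (G : SimpleGraph (Fin n)) [DecidableRel G.Adj]
    (lam : Fin n → ℝ) (hlam : Antitone lam)
    (hchar : (G.adjMatrix ℝ).charpoly = ∏ i, (X - C (lam i)))
    (p : Polynomial ℝ) (hp : p.natDegree ≤ k) (W w : ℝ)
    (hW : IsGreatest {x | ∃ u, x = (aeval (G.adjMatrix ℝ) p) u u} W)
    (hw : IsLeast {x | ∃ u, x = (aeval (G.adjMatrix ℝ) p) u u} w) :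
    G.kIndepNum k ≤ min ((univ.filter fun i => w ≤ p.eval (lam i)).card)
      ((univ.filter fun i => p.eval (lam i) ≤ W).card) := by
  classical
  open InertialAux Matrix in
  have hA : (G.adjMatrix ℝ).IsHermitian := adjHerm G
  set M : Matrix (Fin n) (Fin n) ℝ := aeval (G.adjMatrix ℝ) p with hMdef
  set eig : Fin n → ℝ := hA.eigenvalues with heigdef
  set B : Fin n → (Fin n → ℝ) := fun i => ⇑(hA.eigenvectorBasis i) with hBdef
  have horth : ∀ i j, B i ⬝ᵥ B j = if i = j then 1 else 0 := InertialAux.eigBasis_dot G hA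
  have heig : ∀ i, M.mulVec (B i) = p.eval (eig i) • B i := fun i =>
    InertialAux.aeval_mulVec_eig _ p _ _ (hA.mulVec_eigenvectorBasis i)
  have hprod : ∏ i, (X - C (lam i)) = ∏ i, (X - C (eig i)) :=
    hchar.symm.trans (InertialAux.charpoly_eq_prod_eig G hA)
  have hoff : ∀ s : Finset (Fin n), (∀ u ∈ s, ∀ v ∈ s, ¬ (G.power k).Adj u v) →
      ∀ u ∈ s, ∀ v ∈ s, u ≠ v → M u v = 0 := by
    intro s hs u hu v hv huv
    exact InertialAux.offdiag_zero G p hp u v huv (hs u hu v hv)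
  have main : ∀ s : Finset (Fin n), (∀ u ∈ s, ∀ v ∈ s, ¬ (G.power k).Adj u v) →
      s.card ≤ min ((univ.filter fun i => w ≤ p.eval (lam i)).card)
        ((univ.filter fun i => p.eval (lam i) ≤ W).card) := by
    intro s hs
    refine le_min ?_ ?_
    · rw [InertialAux.count_eq_of_prod_eq lam eig hprod (fun x => w ≤ p.eval x)]
      exact InertialAux.core_bound M (fun i => p.eval (eig i)) B horth heig s w
        (fun u => hw.2 ⟨u, rfl⟩) (hoff s hs)
    · rw [InertialAux.count_eq_of_prod_eq lam eig hprod (fun x => p.eval x ≤ W)]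
      have hneg := InertialAux.core_bound (-M) (fun i => -(p.eval (eig i))) B horth
        (fun i => by rw [Matrix.neg_mulVec, heig, neg_smul])
        s (-W)
        (fun u => by rw [Matrix.neg_apply]; exact neg_le_neg (hW.2 ⟨u, rfl⟩))
        (fun u hu v hv huv => by rw [Matrix.neg_apply, hoff s hs u hu v hv huv, neg_zero])
      have hfe : (univ.filter fun i => -W ≤ -(p.eval (eig i)))
          = univ.filter fun i => p.eval (eig i) ≤ W := by
        apply Finset.filter_congr
        intro i _
        exact neg_le_neg_iff
      rwa [hfe] at hneg
  rw [SimpleGraph.kIndepNum, SimpleGraph.indepNum']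
  refine csSup_le ⟨0, ∅, by simp⟩ ?_
  rintro m ⟨s, rfl, hs⟩
  exact main s hs
end

section
/- Let G be a regular graph with n vertices and adjacency eigenvalues λ₁ ≥ ... ≥ λₙ. Let p be a polynomial of degree at most k with p(λ₁) > λ(p), where λ(p) = min_{i∈[2,n]} p(λᵢ), and let W(p) = max_u (p(A))_{uu}. Then α_k(G) ≤ n (W(p) - λ(p)) / (p(λ₁) - λ(p)). -/
open Polynomial Finset
open Matrix

open Matrix in
private lemma sum_mulVec' {n : ℕ} {ι : Type*} (s : Finset ι) (f : ι → Matrix (Fin n) (Fin n) ℝ)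
    (w : Fin n → ℝ) : (∑ i ∈ s, f i) *ᵥ w = ∑ i ∈ s, f i *ᵥ w := by
  ext u
  simp only [Matrix.mulVec, dotProduct, Matrix.sum_apply, Finset.sum_apply,
    Finset.sum_mul]
  exact Finset.sum_comm

open Matrix in
private lemma mulVec_sum' {n : ℕ} {ι : Type*} (s : Finset ι) (A : Matrix (Fin n) (Fin n) ℝ)
    (f : ι → Fin n → ℝ) : A *ᵥ (∑ i ∈ s, f i) = ∑ i ∈ s, A *ᵥ f i := by
  ext u
  simp only [Matrix.mulVec, dotProduct, Finset.sum_apply, Finset.mul_sum]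
  exact Finset.sum_comm

open Matrix in
private lemma dot_sum' {n : ℕ} {ι : Type*} (x : Fin n → ℝ) (s : Finset ι) (f : ι → Fin n → ℝ) :
    x ⬝ᵥ (∑ i ∈ s, f i) = ∑ i ∈ s, x ⬝ᵥ f i := by
  simp only [dotProduct, Finset.sum_apply, Finset.mul_sum]
  exact Finset.sum_comm

open Matrix in
private lemma aeval_mulVec {n : ℕ} (A : Matrix (Fin n) (Fin n) ℝ) {t : ℝ} {w : Fin n → ℝ}
    (heig : A *ᵥ w = t • w) (q : ℝ[X]) : (aeval A q) *ᵥ w = q.eval t • w := by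
  have hpow : ∀ m : ℕ, A ^ m *ᵥ w = t ^ m • w := by
    intro m
    induction m with
    | zero => simp
    | succ m ih =>
      rw [pow_succ, ← mulVec_mulVec, heig, mulVec_smul, ih, smul_smul, pow_succ, mul_comm]
  rw [aeval_eq_sum_range, eval_eq_sum_range, sum_mulVec', Finset.sum_smul]
  refine Finset.sum_congr rfl fun i _ => ?_
  rw [smul_mulVec, hpow, smul_smul]

open Matrix in
private lemma eval_charpoly' {n : ℕ} (A : Matrix (Fin n) (Fin n) ℝ) (t : ℝ) :
    A.charpoly.eval t = (Matrix.scalar (Fin n) t - A).det := by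
  rw [Matrix.charpoly, eval_det, Matrix.matPolyEquiv_charmatrix, eval_sub, eval_X, eval_C]

open Matrix in
private lemma scalar_mulVec {n : ℕ} (t : ℝ) (w : Fin n → ℝ) :
    Matrix.scalar (Fin n) t *ᵥ w = t • w := by
  ext u
  simp [Matrix.scalar, mulVec_diagonal]

private lemma eval_prod_lam {n : ℕ} (lam : Fin n → ℝ) (t : ℝ) :
    (∏ i, (X - C (lam i))).eval t = ∏ i, (t - lam i) := by
  rw [eval_prod]
  exact Finset.prod_congr rfl fun i _ => by rw [eval_sub, eval_X, eval_C]

open Matrix in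
private lemma eig_mem' {n : ℕ} {A : Matrix (Fin n) (Fin n) ℝ} {lam : Fin n → ℝ}
    (hchar : A.charpoly = ∏ i, (X - C (lam i))) {t : ℝ} {w : Fin n → ℝ} (hw : w ≠ 0)
    (heig : A *ᵥ w = t • w) : ∃ j, t = lam j := by
  have hdet : (Matrix.scalar (Fin n) t - A).det = 0 := by
    rw [← Matrix.exists_mulVec_eq_zero_iff]
    exact ⟨w, hw, by rw [sub_mulVec, scalar_mulVec, heig, sub_self]⟩
  have h0 : ∏ i, (t - lam i) = 0 := by
    rw [← eval_prod_lam, ← hchar, eval_charpoly', hdet]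
  obtain ⟨j, -, hj⟩ := Finset.prod_eq_zero_iff.mp h0
  exact ⟨j, by linarith [sub_eq_zero.mp hj]⟩

open Matrix in
private lemma root_eig' {n : ℕ} {A : Matrix (Fin n) (Fin n) ℝ} {lam : Fin n → ℝ}
    (hchar : A.charpoly = ∏ i, (X - C (lam i))) (j : Fin n) :
    ∃ w : Fin n → ℝ, w ≠ 0 ∧ A *ᵥ w = lam j • w := by
  have hdet : (Matrix.scalar (Fin n) (lam j) - A).det = 0 := by
    rw [← eval_charpoly', hchar, eval_prod_lam]
    exact Finset.prod_eq_zero (mem_univ j) (sub_self _)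
  obtain ⟨w, hw, hww⟩ := Matrix.exists_mulVec_eq_zero_iff.mpr hdet
  refine ⟨w, hw, ?_⟩
  rw [sub_mulVec, scalar_mulVec, sub_eq_zero] at hww
  exact hww.symm

open Matrix in
private lemma eig_le_deg' {n d : ℕ} (G : SimpleGraph (Fin n)) [DecidableRel G.Adj]
    (hreg : G.IsRegularOfDegree d) {t : ℝ} {w : Fin n → ℝ} (hw : w ≠ 0)
    (heig : G.adjMatrix ℝ *ᵥ w = t • w) : t ≤ d := by
  obtain ⟨v₀, hv₀⟩ := Function.ne_iff.mp hw
  obtain ⟨u, -, hu⟩ := Finset.exists_max_image Finset.univ (fun x => |w x|) ⟨v₀, mem_univ _⟩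
  have hwu : 0 < |w u| := lt_of_lt_of_le (abs_pos.mpr hv₀) (hu v₀ (mem_univ _))
  have h1 : t * w u = ∑ x ∈ G.neighborFinset u, w x := by
    have := congrFun heig u
    rw [SimpleGraph.adjMatrix_mulVec_apply] at this
    simpa using this.symm
  have h2 : |t| * |w u| ≤ (d : ℝ) * |w u| := by
    rw [← abs_mul, h1]
    calc |∑ x ∈ G.neighborFinset u, w x| ≤ ∑ x ∈ G.neighborFinset u, |w x| :=
          Finset.abs_sum_le_sum_abs _ _
      _ ≤ ∑ _x ∈ G.neighborFinset u, |w u| :=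
          Finset.sum_le_sum fun x _ => hu x (mem_univ _)
      _ = (d : ℝ) * |w u| := by
          rw [Finset.sum_const, nsmul_eq_mul]
          congr 1
          exact_mod_cast congrArg Nat.cast (hreg u)
  calc t ≤ |t| := le_abs_self t
    _ ≤ d := le_of_mul_le_mul_right h2 hwu

open Matrix in
private lemma eig_const' {n d : ℕ} (G : SimpleGraph (Fin n)) [DecidableRel G.Adj]
    (hn : 0 < n) (hconn : G.Connected) (hreg : G.IsRegularOfDegree d) {w : Fin n → ℝ}
    (heig : G.adjMatrix ℝ *ᵥ w = (d : ℝ) • w) : ∃ a : ℝ, w = fun _ => a := by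
  obtain ⟨u₀, -, hmax⟩ := Finset.exists_max_image Finset.univ w ⟨⟨0, hn⟩, mem_univ _⟩
  set M := w u₀ with hM
  have key : ∀ u x : Fin n, G.Adj u x → w u = M → w x = M := by
    intro u x hux hu
    by_contra hne
    have hlt : w x < M := lt_of_le_of_ne (hmax x (mem_univ _)) hne
    have h1 : (d : ℝ) * M = ∑ y ∈ G.neighborFinset u, w y := by
      have := congrFun heig u
      rw [SimpleGraph.adjMatrix_mulVec_apply] at this
      rw [this]
      simp [hu]
    have h2 : ∑ y ∈ G.neighborFinset u, w y < ∑ _y ∈ G.neighborFinset u, M :=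
      Finset.sum_lt_sum (fun y _ => hmax y (mem_univ _))
        ⟨x, (G.mem_neighborFinset u x).mpr hux, hlt⟩
    have hc : #(G.neighborFinset u) = d := hreg u
    rw [Finset.sum_const, nsmul_eq_mul, hc] at h2
    exact absurd h1 (ne_of_gt h2)
  have hall : ∀ (a b : Fin n) (_p : G.Walk a b), w a = M → w b = M := by
    intro a b p
    induction p with
    | nil => exact id
    | cons h q ih => exact fun ha => ih (key _ _ h ha)
  refine ⟨M, funext fun x => ?_⟩
  obtain ⟨p⟩ := hconn.preconnected u₀ x
  exact hall _ _ p rfl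

/-- **Ratio-type bound for `α_k` (Abiad–Coutinho–Fiol).** For a connected regular graph `G`
and a polynomial `p` of degree at most `k` with `p(λ₁) > λ(p) = min_{i∈[2,n]} p(λᵢ)`,
`α_k(G) ≤ n (W(p) - λ(p)) / (p(λ₁) - λ(p))`. -/
theorem ratio_type_bound_alpha_k {n d k : ℕ} (hn : 0 < n) (G : SimpleGraph (Fin n))
    [DecidableRel G.Adj] (hconn : G.Connected) (hreg : G.IsRegularOfDegree d)
    (lam : Fin n → ℝ) (hlam : Antitone lam)
    (hchar : (G.adjMatrix ℝ).charpoly = ∏ i, (X - C (lam i)))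
    (p : Polynomial ℝ) (hp : p.natDegree ≤ k) (W lamp : ℝ)
    (hW : IsGreatest {x | ∃ u, x = (aeval (G.adjMatrix ℝ) p) u u} W)
    (hlamp : IsLeast {x | ∃ i, i ≠ ⟨0, hn⟩ ∧ x = p.eval (lam i)} lamp)
    (hgt : lamp < p.eval (lam ⟨0, hn⟩)) :
    (G.kIndepNum k : ℝ) ≤ n * (W - lamp) / (p.eval (lam ⟨0, hn⟩) - lamp) := by
  classical
  set A : Matrix (Fin n) (Fin n) ℝ := G.adjMatrix ℝ with hAdef
  have hA : A.IsHermitian := by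
    show Aᴴ = A
    ext i j
    simp [Matrix.conjTranspose_apply, hAdef, SimpleGraph.adjMatrix_apply, SimpleGraph.adj_comm]
  have hAT : Aᵀ = A := by
    ext i j
    simp [Matrix.transpose_apply, hAdef, SimpleGraph.adjMatrix_apply, SimpleGraph.adj_comm]
  set U : Matrix (Fin n) (Fin n) ℝ := (hA.eigenvectorUnitary : Matrix (Fin n) (Fin n) ℝ)
    with hUdef
  set μ : Fin n → ℝ := hA.eigenvalues with hmudef
  set v : Fin n → Fin n → ℝ := fun i u => U u i with hvdef
  have heig : ∀ i, A *ᵥ v i = μ i • v i := by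
    intro i
    have h := hA.mulVec_eigenvectorBasis i
    exact h
  have hstar : star U * U = 1 := Unitary.coe_star_mul_self _
  have horth : ∀ i j, v i ⬝ᵥ v j = if i = j then 1 else 0 := by
    intro i j
    have := congrFun (congrFun hstar i) j
    simpa [Matrix.mul_apply, Matrix.star_apply, Matrix.one_apply, dotProduct,
      hvdef] using this
  have hrepr : ∀ x : Fin n → ℝ, x = ∑ i, (v i ⬝ᵥ x) • v i := by
    intro x
    have h : U * star U = 1 := Unitary.coe_mul_star_self _
    have hx : x = U *ᵥ (star U *ᵥ x) := by rw [Matrix.mulVec_mulVec, h, Matrix.one_mulVec]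
    conv_lhs => rw [hx]
    ext u
    simp only [Matrix.mulVec, dotProduct, Matrix.star_apply, star_trivial,
      Finset.sum_apply, Pi.smul_apply, smul_eq_mul, Finset.mul_sum, Finset.sum_mul, hvdef]
    refine Finset.sum_congr rfl fun j _ => Finset.sum_congr rfl fun i _ => by ring
  have hvne : ∀ i, v i ≠ 0 := by
    intro i h
    have := horth i i
    rw [h, zero_dotProduct, if_pos rfl] at this
    exact zero_ne_one this
  -- lam 0 = d
  have hone_ne : (fun _ : Fin n => (1 : ℝ)) ≠ 0 := by
    intro h
    have := congrFun h ⟨0, hn⟩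
    simpa using this
  have hd_eig : A *ᵥ (fun _ => (1 : ℝ)) = (d : ℝ) • (fun _ => (1 : ℝ)) := by
    funext u
    have := SimpleGraph.adjMatrix_mulVec_const_apply_of_regular (α := ℝ) (a := (1 : ℝ))
      hreg (v := u)
    simpa [Function.const, hAdef] using this
  obtain ⟨j₁, hj₁⟩ := eig_mem' hchar hone_ne hd_eig
  have hlam0_ge : (d : ℝ) ≤ lam ⟨0, hn⟩ := by
    rw [hj₁]
    exact hlam (by simp [Fin.le_def])
  have hlam0_le : lam ⟨0, hn⟩ ≤ (d : ℝ) := by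
    obtain ⟨w, hw, hww⟩ := root_eig' hchar ⟨0, hn⟩
    exact eig_le_deg' G hreg hw (by rw [← hAdef]; exact hww)
  have hlam0 : lam ⟨0, hn⟩ = (d : ℝ) := le_antisymm hlam0_le hlam0_ge
  have hmu_lam : ∀ i, μ i ≠ (d : ℝ) → lamp ≤ p.eval (μ i) := by
    intro i hne
    obtain ⟨j, hj⟩ := eig_mem' hchar (hvne i) (heig i)
    have hj0 : j ≠ ⟨0, hn⟩ := by
      intro h
      exact hne (by rw [hj, h, hlam0])
    rw [hj]
    exact hlamp.2 ⟨j, hj0, rfl⟩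
  have hdiag : ∀ i, μ i = (d : ℝ) → ∃ a : ℝ, a ≠ 0 ∧ v i = fun _ => a := by
    intro i hi
    obtain ⟨a, ha⟩ := eig_const' G hn hconn hreg
      (by rw [← hAdef, ← hi]; exact heig i)
    refine ⟨a, ?_, ha⟩
    rintro rfl
    exact hvne i (by rw [ha]; funext u; rfl)
  have hn0 : (n : ℝ) ≠ 0 := Nat.cast_ne_zero.mpr hn.ne'
  -- the special index i₀
  obtain ⟨i₀, hi₀⟩ : ∃ i₀, μ i₀ = (d : ℝ) := by
    have hone := hrepr (fun _ => (1 : ℝ))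
    have hex : ∃ j, v j ⬝ᵥ (fun _ => (1 : ℝ)) ≠ 0 := by
      by_contra h
      push_neg at h
      apply hone_ne
      rw [hone]
      exact Finset.sum_eq_zero fun j _ => by rw [h j, zero_smul]
    obtain ⟨j, hj⟩ := hex
    refine ⟨j, ?_⟩
    have h1 : v j ⬝ᵥ (A *ᵥ (fun _ => (1 : ℝ))) = (d : ℝ) * (v j ⬝ᵥ (fun _ => (1 : ℝ))) := by
      rw [hd_eig, dotProduct_smul, smul_eq_mul]
    have h2 : v j ⬝ᵥ (A *ᵥ (fun _ => (1 : ℝ))) = μ j * (v j ⬝ᵥ (fun _ => (1 : ℝ))) := by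
      rw [Matrix.dotProduct_mulVec, ← hAT, Matrix.vecMul_transpose, heig j,
        smul_dotProduct, smul_eq_mul]
    exact (mul_right_cancel₀ hj (h1.symm.trans h2)).symm
  have huniq : ∀ i, μ i = (d : ℝ) → i = i₀ := by
    intro i hi
    by_contra hne
    obtain ⟨a, ha0, hva⟩ := hdiag i hi
    obtain ⟨b, hb0, hvb⟩ := hdiag i₀ hi₀
    have h := horth i i₀
    rw [if_neg hne, hva, hvb] at h
    have habs : (n : ℝ) * (a * b) = 0 := by
      rw [dotProduct] at h
      simpa [Finset.sum_const, Finset.card_univ] using h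
    rcases mul_eq_zero.mp habs with h' | h'
    · exact hn0 h'
    · exact (mul_ne_zero ha0 hb0) h'
  -- extract a maximum k-independent set
  have hkdef : G.kIndepNum k = sSup {m | ∃ s : Finset (Fin n), s.card = m ∧
      ∀ u ∈ s, ∀ x ∈ s, ¬ (G.power k).Adj u x} := rfl
  have hbdd : BddAbove {m | ∃ s : Finset (Fin n), s.card = m ∧
      ∀ u ∈ s, ∀ x ∈ s, ¬ (G.power k).Adj u x} := by
    refine ⟨n, fun m hm => ?_⟩
    obtain ⟨s, hs, -⟩ := hm
    rw [← hs]
    simpa using Finset.card_le_univ s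
  have hmem : ∃ s : Finset (Fin n), s.card = G.kIndepNum k ∧
      ∀ u ∈ s, ∀ x ∈ s, ¬ (G.power k).Adj u x := by
    rw [hkdef]
    have hne : {m | ∃ s : Finset (Fin n), s.card = m ∧
        ∀ u ∈ s, ∀ x ∈ s, ¬ (G.power k).Adj u x}.Nonempty := ⟨0, ∅, by simp, by simp⟩
    exact Nat.sSup_mem hne hbdd
  have h1 : 1 ≤ G.kIndepNum k := by
    rw [hkdef]
    apply le_csSup hbdd
    refine ⟨{⟨0, hn⟩}, Finset.card_singleton _, ?_⟩
    intro u hu x hx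
    rw [Finset.mem_singleton] at hu hx
    subst hu; subst hx
    exact fun hadj => hadj.1 rfl
  obtain ⟨s, hcard, hindep⟩ := hmem
  have hdist : ∀ u ∈ s, ∀ x ∈ s, u ≠ x → k < G.dist u x := by
    intro u hu x hx hne
    by_contra hle
    push_neg at hle
    exact hindep u hu x hx ⟨hne, hconn.preconnected u x, hle⟩
  set P : Matrix (Fin n) (Fin n) ℝ := aeval A p with hPdef
  have hPoff : ∀ u ∈ s, ∀ x ∈ s, u ≠ x → P u x = 0 := by
    intro u hu x hx hne
    have hd := hdist u hu x hx hne
    have hpow0 : ∀ i ≤ k, (A ^ i) u x = 0 := by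
      intro i hik
      rw [hAdef, SimpleGraph.adjMatrix_pow_apply_eq_card_walk]
      norm_cast
      rw [Fintype.card_eq_zero_iff]
      constructor
      rintro ⟨q, hq⟩
      have hql := SimpleGraph.dist_le q
      simp only [Set.mem_setOf_eq] at hq
      omega
    rw [hPdef, aeval_eq_sum_range, Matrix.sum_apply]
    refine Finset.sum_eq_zero fun i hi => ?_
    rw [Matrix.smul_apply,
      hpow0 i (le_trans (Nat.lt_succ_iff.mp (Finset.mem_range.mp hi)) hp), smul_zero]
  set χ : Fin n → ℝ := fun u => if u ∈ s then 1 else 0 with hχdef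
  set c : ℝ := (s.card : ℝ) with hcdef
  set y : Fin n → ℝ := fun i => v i ⬝ᵥ χ with hydef
  have hchiexp : χ = ∑ i, y i • v i := hrepr χ
  have hPv : ∀ i, P *ᵥ v i = p.eval (μ i) • v i := fun i => aeval_mulVec A (heig i) p
  have hdotv : ∀ i, χ ⬝ᵥ v i = y i := fun i => dotProduct_comm _ _
  have hPchi : P *ᵥ χ = ∑ i, (y i * p.eval (μ i)) • v i := by
    conv_lhs => rw [hchiexp]
    rw [mulVec_sum']
    refine Finset.sum_congr rfl fun i _ => ?_
    rw [Matrix.mulVec_smul, hPv, smul_smul]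
  have hQeig : χ ⬝ᵥ (P *ᵥ χ) = ∑ i, p.eval (μ i) * (y i) ^ 2 := by
    rw [hPchi, dot_sum']
    refine Finset.sum_congr rfl fun i _ => ?_
    rw [dotProduct_smul, smul_eq_mul, hdotv]
    ring
  have hdots : ∀ z : Fin n → ℝ, χ ⬝ᵥ z = ∑ u ∈ s, z u := by
    intro z
    rw [dotProduct]
    simp only [hχdef, ite_mul, one_mul, zero_mul]
    rw [Finset.sum_ite_mem, Finset.univ_inter]
  have hnormsum : ∑ i, (y i) ^ 2 = c := by
    have ha : χ ⬝ᵥ χ = c := by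
      rw [hdots]
      simp only [hχdef]
      rw [Finset.sum_congr rfl (fun u hu => if_pos hu), Finset.sum_const, nsmul_eq_mul,
        mul_one, hcdef]
    have hb : χ ⬝ᵥ χ = ∑ i, (y i) ^ 2 := by
      have hstep : χ ⬝ᵥ χ = χ ⬝ᵥ (∑ i, y i • v i) := congrArg (fun z => χ ⬝ᵥ z) hchiexp
      rw [hstep, dot_sum']
      refine Finset.sum_congr rfl fun i _ => ?_
      rw [dotProduct_smul, smul_eq_mul, hdotv]
      ring
    rw [← hb, ha]
  -- upper bound
  have hQup : χ ⬝ᵥ (P *ᵥ χ) ≤ c * W := by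
    rw [hdots]
    have hrow : ∀ u ∈ s, (P *ᵥ χ) u = P u u := by
      intro u hu
      have hthis : (P *ᵥ χ) u = ∑ x ∈ s, P u x := by
        rw [Matrix.mulVec, dotProduct]
        simp only [hχdef, mul_ite, mul_one, mul_zero]
        rw [Finset.sum_ite_mem, Finset.univ_inter]
      rw [hthis]
      exact Finset.sum_eq_single_of_mem u hu fun x hx hxu =>
        hPoff u hu x hx (fun hh => hxu hh.symm)
    calc ∑ u ∈ s, (P *ᵥ χ) u = ∑ u ∈ s, P u u := Finset.sum_congr rfl hrow
      _ ≤ ∑ _u ∈ s, W := Finset.sum_le_sum fun u _ => hW.2 ⟨u, rfl⟩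
      _ = c * W := by rw [Finset.sum_const, nsmul_eq_mul, hcdef]
  -- lower bound
  have hyI0 : (y i₀) ^ 2 = c ^ 2 / n := by
    obtain ⟨a, ha0, hva⟩ := hdiag i₀ hi₀
    have hna : (n : ℝ) * (a * a) = 1 := by
      have h := horth i₀ i₀
      rw [if_pos rfl, hva, dotProduct] at h
      simpa [Finset.sum_const, Finset.card_univ] using h
    have hya : y i₀ = c * a := by
      rw [hydef]
      show v i₀ ⬝ᵥ χ = c * a
      rw [dotProduct_comm, hdots, hva, Finset.sum_const, nsmul_eq_mul, hcdef]
    rw [hya, eq_div_iff hn0]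
    linear_combination (c ^ 2) * hna
  have hQlow : p.eval (d : ℝ) * (c ^ 2 / n) + lamp * (c - c ^ 2 / n) ≤ χ ⬝ᵥ (P *ᵥ χ) := by
    rw [hQeig, ← Finset.add_sum_erase _ _ (Finset.mem_univ i₀)]
    have herase : ∑ i ∈ Finset.univ.erase i₀, (y i) ^ 2 = c - c ^ 2 / n := by
      rw [Finset.sum_erase_eq_sub (Finset.mem_univ i₀), hnormsum, hyI0]
    have hbound : lamp * (c - c ^ 2 / n) ≤ ∑ i ∈ Finset.univ.erase i₀, p.eval (μ i) * (y i) ^ 2 := by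
      rw [← herase, Finset.mul_sum]
      refine Finset.sum_le_sum fun i hi => ?_
      have hne : μ i ≠ (d : ℝ) := fun h => (Finset.ne_of_mem_erase hi) (huniq i h)
      exact mul_le_mul_of_nonneg_right (hmu_lam i hne) (sq_nonneg _)
    have h00 : p.eval (μ i₀) * (y i₀) ^ 2 = p.eval (d : ℝ) * (c ^ 2 / n) := by rw [hi₀, hyI0]
    linarith
  -- final algebra
  have hgt' : lamp < p.eval (d : ℝ) := by rw [← hlam0]; exact hgt
  have hD : 0 < p.eval (d : ℝ) - lamp := by linarith
  have hc1 : 1 ≤ c := by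
    rw [hcdef]
    have : 1 ≤ s.card := by rw [hcard]; exact h1
    exact_mod_cast this
  have hc0 : 0 < c := lt_of_lt_of_le one_pos hc1
  have hnpos : (0 : ℝ) < n := by exact_mod_cast hn
  have key : p.eval (d : ℝ) * (c ^ 2 / n) + lamp * (c - c ^ 2 / n) ≤ c * W :=
    le_trans hQlow hQup
  have key2 : p.eval (d : ℝ) * c ^ 2 + lamp * (n * c - c ^ 2) ≤ n * (c * W) := by
    have h := mul_le_mul_of_nonneg_left key hnpos.le
    have hx : (n : ℝ) * (c ^ 2 / n) = c ^ 2 := by field_simp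
    calc p.eval (d : ℝ) * c ^ 2 + lamp * (n * c - c ^ 2)
        = p.eval (d : ℝ) * ((n : ℝ) * (c ^ 2 / n))
            + lamp * (n * c - (n : ℝ) * (c ^ 2 / n)) := by rw [hx]
      _ = (n : ℝ) * (p.eval (d : ℝ) * (c ^ 2 / n) + lamp * (c - c ^ 2 / n)) := by ring
      _ ≤ n * (c * W) := h
  have hgoal : c * (p.eval (d : ℝ) - lamp) ≤ n * (W - lamp) := by
    have h3 : c * (c * (p.eval (d : ℝ) - lamp)) ≤ c * ((n : ℝ) * (W - lamp)) := by
      nlinarith [key2]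
    exact le_of_mul_le_mul_left h3 hc0
  have hcast : (G.kIndepNum k : ℝ) = c := by rw [hcdef, hcard]
  rw [hcast, hlam0, div_eq_mul_inv, ← div_eq_mul_inv, le_div_iff₀ hD]
  exact hgoal
end

section
/- Let G be a graph on n vertices with adjacency matrix A, eigenvalues λ₁ ≥ ... ≥ λₙ, and Perron eigenvector (positive λ₁-eigenvector). Let p be a polynomial of degree at most k with p(λ₁) > p(λᵢ) for all i ≥ 2, and set W(p) = max_u (p(A))_{uu} and λ(p) = min_{i∈[2,n]} p(λᵢ). Then χ_k(G) ≥ (p(λ₁) − λ(p)) / (W(p) − λ(p)). -/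
open Polynomial Finset

section AuxSpectral
open Matrix

lemma aux_charpoly_diagonal {n : ℕ} (d : Fin n → ℝ) :
    (Matrix.diagonal d).charpoly = ∏ i, (X - C (d i)) := by
  rw [Matrix.charpoly_of_upperTriangular _ (Matrix.blockTriangular_diagonal d)]
  simp

lemma aux_charpoly_conj {n : ℕ} (U D : Matrix (Fin n) (Fin n) ℝ)
    (h1 : U * star U = 1) :
    (U * D * star U).charpoly = D.charpoly := by
  let f : Matrix (Fin n) (Fin n) ℝ →+* Matrix (Fin n) (Fin n) ℝ[X] := (C : ℝ →+* ℝ[X]).mapMatrix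
  have key : charmatrix (U * D * star U) = f U * charmatrix D * f (star U) := by
    unfold Matrix.charmatrix
    rw [mul_sub, sub_mul]
    congr 1
    · have hc := scalar_commute (X : ℝ[X]) (Commute.all _) (f (star U))
      rw [mul_assoc, hc.eq, ← mul_assoc, ← f.map_mul, h1, f.map_one, one_mul]
    · show f (U * D * star U) = f U * f D * f (star U)
      rw [f.map_mul, f.map_mul]
  unfold Matrix.charpoly
  rw [key, det_mul, det_mul, mul_right_comm, ← det_mul, ← f.map_mul, h1, f.map_one, det_one,
    one_mul]

lemma aux_charpoly_eigen {n : ℕ} (A : Matrix (Fin n) (Fin n) ℝ) (hA : A.IsHermitian) :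
    A.charpoly = ∏ i, (X - C (hA.eigenvalues i)) := by
  have hU : (hA.eigenvectorUnitary : Matrix (Fin n) (Fin n) ℝ) *
      star (hA.eigenvectorUnitary : Matrix (Fin n) (Fin n) ℝ) = 1 :=
    (Matrix.mem_unitaryGroup_iff).mp hA.eigenvectorUnitary.2
  conv_lhs => rw [hA.spectral_theorem]
  rw [Unitary.conjStarAlgAut_apply, aux_charpoly_conj _ _ hU]
  have h2 : (RCLike.ofReal ∘ hA.eigenvalues : Fin n → ℝ) = hA.eigenvalues := by
    ext i; simp
  rw [h2, aux_charpoly_diagonal]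

lemma aux_pow_mulVec {n : ℕ} (A : Matrix (Fin n) (Fin n) ℝ) (v : Fin n → ℝ) (μ : ℝ)
    (hv : A *ᵥ v = μ • v) (m : ℕ) : (A ^ m) *ᵥ v = μ ^ m • v := by
  induction m with
  | zero => simp [Matrix.one_mulVec]
  | succ m ih =>
      rw [pow_succ, ← Matrix.mulVec_mulVec, hv, Matrix.mulVec_smul, ih, smul_smul, pow_succ,
        mul_comm]

lemma aux_aeval_mulVec_s13 {n : ℕ} (A : Matrix (Fin n) (Fin n) ℝ) (v : Fin n → ℝ) (μ : ℝ)
    (hv : A *ᵥ v = μ • v) (q : ℝ[X]) :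
    (aeval A q) *ᵥ v = q.eval μ • v := by
  induction q using Polynomial.induction_on' with
  | add f g hf hg => rw [map_add, Matrix.add_mulVec, hf, hg, eval_add, add_smul]
  | monomial m a =>
      rw [aeval_monomial, eval_monomial, Algebra.algebraMap_eq_smul_one, smul_mul_assoc,
        one_mul, Matrix.smul_mulVec, aux_pow_mulVec A v μ hv m, smul_smul]

lemma aux_quad {n : ℕ} (A : Matrix (Fin n) (Fin n) ℝ) (hA : A.IsHermitian) (q : ℝ[X])
    (y : EuclideanSpace ℝ (Fin n)) :
    ∑ u, y u * ((aeval A q) *ᵥ (y : Fin n → ℝ)) u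
      = ∑ i, q.eval (hA.eigenvalues i) * (hA.eigenvectorBasis.repr y i)^2 := by
  set b := hA.eigenvectorBasis with hb
  set μ := hA.eigenvalues with hμ
  have hy : (y : Fin n → ℝ) = ∑ i, b.repr y i • (b i : Fin n → ℝ) :=
    by simpa using congrArg WithLp.ofLp (b.sum_repr y).symm
  have hinner : ∀ i, ∑ u, y u * (b i : Fin n → ℝ) u = b.repr y i := by
    intro i
    rw [b.repr_apply_apply]
    simp [PiLp.inner_apply, RCLike.inner_apply, mul_comm]
  have hmv : (aeval A q) *ᵥ (y : Fin n → ℝ)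
      = ∑ i, (b.repr y i * q.eval (μ i)) • (b i : Fin n → ℝ) := by
    conv_lhs => rw [hy]
    rw [← Matrix.mulVecLin_apply, map_sum]
    refine Finset.sum_congr rfl fun i _ => ?_
    rw [_root_.map_smul, Matrix.mulVecLin_apply,
      aux_aeval_mulVec_s13 A (b i) (μ i) (hA.mulVec_eigenvectorBasis i) q, smul_smul]
  rw [hmv]
  calc ∑ u, y u * (∑ i, (b.repr y i * q.eval (μ i)) • (b i : Fin n → ℝ)) u
      = ∑ u, ∑ i, (b.repr y i * q.eval (μ i)) * (y u * (b i : Fin n → ℝ) u) := by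
        refine Finset.sum_congr rfl fun u _ => ?_
        rw [Finset.sum_apply, Finset.mul_sum]
        refine Finset.sum_congr rfl fun i _ => ?_
        simp [Pi.smul_apply]; ring
    _ = ∑ i, (b.repr y i * q.eval (μ i)) * ∑ u, y u * (b i : Fin n → ℝ) u := by
        rw [Finset.sum_comm]
        exact Finset.sum_congr rfl fun i _ => (Finset.mul_sum _ _ _).symm
    _ = ∑ i, q.eval (μ i) * (b.repr y i)^2 := by
        refine Finset.sum_congr rfl fun i _ => ?_
        rw [hinner i]; ring

end AuxSpectral

/-- **First ratio-type bound for `χ_k`.** Let `G` be a connected graph with eigenvalues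
`λ₁ ≥ ⋯ ≥ λₙ` and `p` a polynomial of degree at most `k` with `p(λ₁) > p(λᵢ)` for all
`i ≥ 2`. With `W(p) = max_u (p(A))_{uu}` and `λ(p) = min_{i∈[2,n]} p(λᵢ)`,
`χ_k(G) ≥ (p(λ₁) − λ(p)) / (W(p) − λ(p))`. -/
theorem first_ratio_bound_chi_k {n k : ℕ} (hn : 0 < n) (G : SimpleGraph (Fin n))
    [DecidableRel G.Adj] (hconn : G.Connected)
    (lam : Fin n → ℝ) (hlam : Antitone lam)
    (hchar : (G.adjMatrix ℝ).charpoly = ∏ i, (X - C (lam i)))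
    (p : Polynomial ℝ) (hp : p.natDegree ≤ k)
    (hgap : ∀ i, i ≠ ⟨0, hn⟩ → p.eval (lam i) < p.eval (lam ⟨0, hn⟩))
    (W lamp : ℝ)
    (hW : IsGreatest {x | ∃ u, x = (aeval (G.adjMatrix ℝ) p) u u} W)
    (hlamp : IsLeast {x | ∃ i, i ≠ ⟨0, hn⟩ ∧ x = p.eval (lam i)} lamp)
    (c : ℕ) (hc : (G.power k).chromaticNumber = c) :
    (p.eval (lam ⟨0, hn⟩) - lamp) / (W - lamp) ≤ (c : ℝ) := by
  classical
  set A := G.adjMatrix ℝ with hAdef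
  have hA : A.IsHermitian := by
    show A.conjTranspose = A
    ext i j
    simp [hAdef, Matrix.conjTranspose_apply, G.adj_comm]
  set μ := hA.eigenvalues with hμdef
  set b := hA.eigenvectorBasis with hbdef
  set lam0 := lam ⟨0, hn⟩ with hlam0
  -- multiset of eigenvalues
  have hms : Multiset.map lam Finset.univ.val = Multiset.map μ Finset.univ.val := by
    have h1 : (∏ i, (X - C (lam i))) = (∏ i, (X - C (μ i))) :=
      hchar.symm.trans (aux_charpoly_eigen A hA)
    have h2 : ∀ f : Fin n → ℝ, (∏ i, (X - C (f i))).roots = Multiset.map f Finset.univ.val := by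
      intro f
      have : (∏ i, (X - C (f i)))
          = ((Multiset.map f Finset.univ.val).map fun a => X - C a).prod := by
        rw [Multiset.map_map]; rfl
      rw [this, Polynomial.roots_multiset_prod_X_sub_C]
    rw [← h2 lam, ← h2 μ, h1]
  have hlamne : ∀ j : Fin n, j ≠ ⟨0, hn⟩ → lam j ≠ lam0 := by
    intro j hj h
    exact absurd (hgap j hj) (by rw [h]; exact lt_irrefl _)
  -- count of lam0
  have hcount : ∀ f : Fin n → ℝ,
      (Multiset.map f Finset.univ.val).count lam0
        = (Finset.univ.filter fun j => f j = lam0).card := by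
    intro f
    rw [Multiset.count_map, Finset.card_def, Finset.filter_val]
    exact congrArg _ (Multiset.filter_congr fun x _ => eq_comm)
  have hfilter_lam : (Finset.univ.filter fun j => lam j = lam0) = {⟨0, hn⟩} := by
    ext j
    simp only [Finset.mem_filter, Finset.mem_univ, true_and, Finset.mem_singleton]
    constructor
    · intro h
      by_contra hj
      exact hlamne j hj h
    · rintro rfl; rfl
  have hcard : (Finset.univ.filter fun i => μ i = lam0).card = 1 := by
    rw [← hcount μ, ← hms, hcount lam, hfilter_lam, Finset.card_singleton]
  obtain ⟨i₀, hi₀⟩ := Finset.card_eq_one.mp hcard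
  have hμi₀ : μ i₀ = lam0 := by
    have : i₀ ∈ Finset.univ.filter fun i => μ i = lam0 := by
      rw [hi₀]; exact Finset.mem_singleton_self _
    exact (Finset.mem_filter.mp this).2
  have hμne : ∀ i, i ≠ i₀ → μ i ≠ lam0 := by
    intro i hi h
    have : i ∈ Finset.univ.filter fun i => μ i = lam0 :=
      Finset.mem_filter.mpr ⟨Finset.mem_univ _, h⟩
    rw [hi₀, Finset.mem_singleton] at this
    exact hi this
  have hbound : ∀ i, i ≠ i₀ → lamp ≤ p.eval (μ i) := by
    intro i hi
    have hmem : μ i ∈ Multiset.map lam Finset.univ.val := by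
      rw [hms]
      exact Multiset.mem_map_of_mem _ (Finset.mem_univ_val _)
    obtain ⟨j, -, hj⟩ := Multiset.mem_map.mp hmem
    have hj0 : j ≠ ⟨0, hn⟩ := by
      intro h
      exact hμne i hi (by rw [← hj, h])
    rw [← hj]
    exact hlamp.2 ⟨j, hj0, rfl⟩
  have hlamp_lt : lamp < p.eval lam0 := by
    obtain ⟨j, hj, hje⟩ := hlamp.1
    rw [hje]
    exact hgap j hj
  -- coloring
  have hcol : (G.power k).Colorable c := by
    rw [← SimpleGraph.chromaticNumber_le_iff_colorable, hc]
  obtain ⟨Cc⟩ := hcol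
  have hc0 : 0 < c := by
    rcases Nat.eq_zero_or_pos c with h | h
    · subst h; exact (Cc ⟨0, hn⟩).elim0
    · exact h
  -- matrix B
  set B := aeval A p with hBdef
  have hBdiag : ∀ u, B u u ≤ W := fun u => hW.2 ⟨u, rfl⟩
  have hBoff : ∀ u v : Fin n, u ≠ v → Cc u = Cc v → B u v = 0 := by
    intro u v huv hcc
    have hnadj : ¬ (G.power k).Adj u v := fun h => Cc.valid h hcc
    have hdist : k < G.dist u v := by
      by_contra h
      push_neg at h
      exact hnadj ⟨huv, hconn.preconnected u v, h⟩
    rw [hBdef, aeval_eq_sum_range, Matrix.sum_apply]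
    apply Finset.sum_eq_zero
    intro j hj
    have hjk : j ≤ k := le_trans (Nat.lt_succ_iff.mp (Finset.mem_range.mp hj)) hp
    rw [Matrix.smul_apply]
    have hzero : (A ^ j) u v = 0 := by
      rw [hAdef, SimpleGraph.adjMatrix_pow_apply_eq_card_walk]
      have : IsEmpty {w : G.Walk u v // w.length = j} := by
        constructor
        rintro ⟨w, hw⟩
        have := SimpleGraph.dist_le w
        omega
      have h0 : Fintype.card {p : G.Walk u v | p.length = j} = 0 := @Fintype.card_eq_zero _ _ this
      rw [h0]; simp
    rw [hzero, smul_zero]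
  -- the vectors
  set ν : Fin n → ℝ := (b i₀ : Fin n → ℝ) with hνdef
  set y : Fin c → EuclideanSpace ℝ (Fin n) :=
    fun j => WithLp.toLp 2 (fun u => if Cc u = j then ν u else 0) with hydef
  set t : Fin c → ℝ := fun j => ∑ u, y j u * y j u with htdef
  have ht_nonneg : ∀ j, 0 ≤ t j := fun j => Finset.sum_nonneg fun u _ => mul_self_nonneg _
  -- repr of y j at i₀ equals t j
  have hrepr : ∀ j, b.repr (y j) i₀ = t j := by
    intro j
    rw [b.repr_apply_apply]
    simp only [PiLp.inner_apply, RCLike.inner_apply, conj_trivial]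
    refine Finset.sum_congr rfl fun u _ => ?_
    simp only [hydef, htdef]
    by_cases h : Cc u = j <;> simp [h, hνdef]
  -- Parseval
  have hparseval : ∀ j, ∑ i, (b.repr (y j) i)^2 = t j := by
    intro j
    have h1 := aux_quad A hA 1 (y j)
    simp only [map_one, Matrix.one_mulVec, eval_one, one_mul] at h1
    rw [← h1]
  have hquadB : ∀ j, ∑ u, y j u * (B.mulVec (y j : Fin n → ℝ)) u
      = ∑ i, p.eval (μ i) * (b.repr (y j) i)^2 := fun j => aux_quad A hA p (y j)
  -- upper bound for the quadratic form on each color class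
  have hupper : ∀ j, ∑ u, y j u * (B.mulVec (y j : Fin n → ℝ)) u ≤ W * t j := by
    intro j
    have hexp : ∀ u, y j u * (B.mulVec (y j : Fin n → ℝ)) u = y j u * (B u u * y j u) := by
      intro u
      by_cases hu : Cc u = j
      · congr 1
        show (∑ w, B u w * y j w) = B u u * y j u
        apply Finset.sum_eq_single u
        · intro w _ hw
          by_cases hcw : Cc w = j
          · rw [hBoff u w (Ne.symm hw) (hu.trans hcw.symm), zero_mul]
          · have : y j w = 0 := by simp [hydef, hcw]
            rw [this, mul_zero]
        · intro h; exact absurd (Finset.mem_univ u) h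
      · have : y j u = 0 := by simp [hydef, hu]
        rw [this, zero_mul, zero_mul]
    calc ∑ u, y j u * (B.mulVec (y j : Fin n → ℝ)) u
        = ∑ u, B u u * (y j u * y j u) := by
          refine Finset.sum_congr rfl fun u _ => ?_
          rw [hexp u]; ring
      _ ≤ ∑ u, W * (y j u * y j u) :=
          Finset.sum_le_sum fun u _ =>
            mul_le_mul_of_nonneg_right (hBdiag u) (mul_self_nonneg _)
      _ = W * t j := by rw [← Finset.mul_sum]
  -- lower bound for the quadratic form
  have hlower : ∀ j, lamp * t j + (p.eval lam0 - lamp) * (t j)^2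
      ≤ ∑ i, p.eval (μ i) * (b.repr (y j) i)^2 := by
    intro j
    have hsplit : ∀ g : Fin n → ℝ, ∑ i, g i = g i₀ + ∑ i ∈ Finset.univ.erase i₀, g i := by
      intro g; rw [Finset.add_sum_erase _ g (Finset.mem_univ i₀)]
    have h3 : ∑ i ∈ Finset.univ.erase i₀, (b.repr (y j) i)^2 = t j - (t j)^2 := by
      have h := hparseval j
      rw [hsplit (fun i => (b.repr (y j) i)^2), hrepr j] at h
      linarith
    have h2 : ∑ i ∈ Finset.univ.erase i₀, lamp * (b.repr (y j) i)^2
        ≤ ∑ i ∈ Finset.univ.erase i₀, p.eval (μ i) * (b.repr (y j) i)^2 :=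
      Finset.sum_le_sum fun i hi =>
        mul_le_mul_of_nonneg_right (hbound i (Finset.ne_of_mem_erase hi)) (sq_nonneg _)
    rw [hsplit (fun i => p.eval (μ i) * (b.repr (y j) i)^2), hrepr j, hμi₀]
    calc lamp * t j + (p.eval lam0 - lamp) * (t j)^2
        = p.eval lam0 * (t j)^2 + lamp * (t j - (t j)^2) := by ring
      _ = p.eval lam0 * (t j)^2 + ∑ i ∈ Finset.univ.erase i₀, lamp * (b.repr (y j) i)^2 := by
          rw [← Finset.mul_sum, h3]
      _ ≤ p.eval lam0 * (t j)^2
            + ∑ i ∈ Finset.univ.erase i₀, p.eval (μ i) * (b.repr (y j) i)^2 := by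
          linarith
  have hclass : ∀ j, lamp * t j + (p.eval lam0 - lamp) * (t j)^2 ≤ W * t j := by
    intro j
    have h := hlower j
    rw [← hquadB j] at h
    exact h.trans (hupper j)
  -- the t j sum to 1
  have hsumt : ∑ j, t j = 1 := by
    have hterm : ∀ j u, y j u * y j u = if Cc u = j then ν u * ν u else 0 := by
      intro j u; by_cases h : Cc u = j <;> simp [hydef, h]
    calc ∑ j, t j = ∑ j, ∑ u, if Cc u = j then ν u * ν u else 0 :=
          Finset.sum_congr rfl fun j _ => Finset.sum_congr rfl fun u _ => hterm j u
      _ = ∑ u, ∑ j, if Cc u = j then ν u * ν u else 0 := Finset.sum_comm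
      _ = ∑ u, ν u * ν u := by
          refine Finset.sum_congr rfl fun u _ => ?_
          simp
      _ = 1 := by
          have h1 := aux_quad A hA 1 (b i₀)
          simp only [map_one, Matrix.one_mulVec, eval_one, one_mul] at h1
          rw [hνdef, h1, hbdef]
          simp [OrthonormalBasis.repr_self, EuclideanSpace.single_apply]
  -- Chebyshev
  have hcheb : (1:ℝ) ≤ (c : ℝ) * ∑ j, (t j)^2 := by
    have h := sq_sum_le_card_mul_sum_sq (s := (Finset.univ : Finset (Fin c))) (f := t)
    rw [hsumt] at h
    simpa using h
  have hsum : lamp + (p.eval lam0 - lamp) * ∑ j, (t j)^2 ≤ W := by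
    have h := Finset.sum_le_sum fun j (_ : j ∈ (Finset.univ : Finset (Fin c))) => hclass j
    rw [Finset.sum_add_distrib, ← Finset.mul_sum, ← Finset.mul_sum, ← Finset.mul_sum, hsumt,
      mul_one, mul_one] at h
    exact h
  have hd : 0 < p.eval lam0 - lamp := sub_pos.mpr hlamp_lt
  have hkey : p.eval lam0 - lamp ≤ (c:ℝ) * (W - lamp) := by
    have h1 : (c:ℝ) * (lamp + (p.eval lam0 - lamp) * ∑ j, (t j)^2) ≤ (c:ℝ) * W :=
      mul_le_mul_of_nonneg_left hsum (Nat.cast_nonneg c)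
    have h2 : (p.eval lam0 - lamp) * 1 ≤ (p.eval lam0 - lamp) * ((c:ℝ) * ∑ j, (t j)^2) :=
      mul_le_mul_of_nonneg_left hcheb hd.le
    nlinarith [h1, h2]
  have hW0 : 0 < W - lamp := by
    by_contra h
    push_neg at h
    have : (c:ℝ) * (W - lamp) ≤ 0 :=
      mul_nonpos_of_nonneg_of_nonpos (Nat.cast_nonneg c) h
    linarith
  rw [div_le_iff₀ hW0]
  linarith
end

section
/- Let G be a k-partially walk-regular graph with eigenvalues λ₁ ≥ ... ≥ λₙ, let p be a polynomial of degree at most k with Σ_{i=1}^n p(λᵢ) = 0, and let Φ₁ ≥ Φ₂ ≥ ... ≥ Φₙ be the eigenvalues of p(A). If Φ₂ > 0, then χ_k(G) ≥ 1 − Φ_{n−χ_k+1}/Φ₂. -/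
open Polynomial Finset

open Matrix Complex

section SRBhelpers


section Helpers
variable {m : Type*} [Fintype m] [DecidableEq m] {R : Type*} [CommRing R]

lemma my_charpoly_diagonal (d : m → R) :
    (Matrix.diagonal d).charpoly = ∏ i, (X - C (d i)) := by
  have h : charmatrix (Matrix.diagonal d) = Matrix.diagonal (fun i => (X : R[X]) - C (d i)) := by
    ext i j
    rcases eq_or_ne i j with rfl | hij
    · simp [charmatrix_apply_eq]
    · simp [charmatrix_apply_ne _ _ _ hij, Matrix.diagonal_apply_ne _ hij, diagonal_apply_ne _ hij]
  rw [Matrix.charpoly, h, Matrix.det_diagonal]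

lemma my_charpoly_conj {V W M : Matrix m m R} (hVW : V * W = 1) :
    (V * M * W).charpoly = M.charpoly := by
  have hWV : W * V = 1 := mul_eq_one_comm.mp hVW
  have hmapVW : V.map (C : R →+* R[X]) * W.map C = 1 := by
    rw [← Matrix.map_mul, hVW]
    simp
  have h1 : V.map (C : R →+* R[X]) * Matrix.scalar m (X : R[X]) * W.map C
      = Matrix.scalar m (X : R[X]) := by
    rw [← (Matrix.scalar_commute (X : R[X]) (fun r' => Commute.all _ _) (V.map C)).eq,
      Matrix.mul_assoc, hmapVW, Matrix.mul_one]
  have h2 : V.map (C : R →+* R[X]) * (C : R →+* R[X]).mapMatrix M * W.map C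
      = (C : R →+* R[X]).mapMatrix (V * M * W) := by
    simp only [RingHom.mapMatrix_apply, Matrix.map_mul]
  have hchm : charmatrix (V * M * W) = V.map C * charmatrix M * W.map C := by
    calc charmatrix (V * M * W)
        = Matrix.scalar m (X : R[X]) - (C : R →+* R[X]).mapMatrix (V * M * W) := rfl
      _ = V.map C * charmatrix M * W.map C := by
          rw [← h1, ← h2, charmatrix, Matrix.mul_sub, Matrix.sub_mul]
  have hdet : (V.map (C : R →+* R[X])).det * (W.map C).det = 1 := by
    rw [← Matrix.det_mul, hmapVW, Matrix.det_one]
  rw [Matrix.charpoly, hchm, Matrix.det_mul, Matrix.det_mul, mul_right_comm, hdet, one_mul,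
    Matrix.charpoly]

lemma my_conj_pow {V W D : Matrix m m R} (hVW : V * W = 1) (hWV : W * V = 1) (i : ℕ) :
    (V * D * W) ^ i = V * D ^ i * W := by
  induction i with
  | zero => simp [hVW]
  | succ i ih =>
      rw [pow_succ, ih, pow_succ]
      calc V * D ^ i * W * (V * D * W) = V * D ^ i * (W * V) * D * W := by
            simp only [Matrix.mul_assoc]
        _ = V * (D ^ i * D) * W := by rw [hWV]; simp only [Matrix.mul_one, Matrix.mul_assoc]

lemma my_aeval_conj {V W D : Matrix m m R} (hVW : V * W = 1) (hWV : W * V = 1) (q : R[X]) :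
    aeval (V * D * W) q = V * aeval D q * W := by
  induction q using Polynomial.induction_on' with
  | add f g hf hg =>
      rw [map_add, map_add, hf, hg, Matrix.mul_add, Matrix.add_mul]
  | monomial i a =>
      rw [aeval_monomial, aeval_monomial, my_conj_pow hVW hWV]
      simp only [← Matrix.mul_assoc]
      rw [Algebra.commutes]

lemma my_aeval_diagonal (d : m → R) (q : R[X]) :
    aeval (Matrix.diagonal d) q = Matrix.diagonal (fun i => q.eval (d i)) := by
  induction q using Polynomial.induction_on' with
  | add f g hf hg =>
      rw [map_add, hf, hg, Matrix.diagonal_add]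
      simp [eval_add]
  | monomial i a =>
      rw [aeval_monomial, Matrix.diagonal_pow]
      ext u v
      rcases eq_or_ne u v with rfl | huv
      · simp [Matrix.algebraMap_matrix_apply, eval_monomial]
      · simp [Matrix.diagonal_apply_ne _ huv, Matrix.algebraMap_matrix_apply, huv]

lemma my_multiset_eq_of_prod_eq {R : Type*} [CommRing R] [IsDomain R] {f g : m → R}
    (h : ∏ i, (X - C (f i)) = ∏ i, (X - C (g i))) :
    Multiset.map f Finset.univ.val = Multiset.map g Finset.univ.val := by
  have key : ∀ f : m → R, (∏ i, (X - C (f i))).roots = Multiset.map f Finset.univ.val := by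
    intro f
    have h1 : Multiset.map (fun i => X - C (f i)) Finset.univ.val
        = Multiset.map (fun a => X - C a) (Multiset.map f Finset.univ.val) := by
      rw [Multiset.map_map]; rfl
    rw [Finset.prod_eq_multiset_prod, h1, roots_multiset_prod_X_sub_C]
  have hf := key f
  have hg := key g
  rw [← hf, ← hg, h]

end Helpers

section H2
variable {m : Type*} [Fintype m] [DecidableEq m] {𝕜 : Type*} [RCLike 𝕜]

lemma my_hermitian_charpoly {M : Matrix m m 𝕜} (hM : M.IsHermitian) :
    M.charpoly = ∏ i, (X - C ((hM.eigenvalues i : 𝕜))) := by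
  have hVW : (hM.eigenvectorUnitary : Matrix m m 𝕜) * star (hM.eigenvectorUnitary : Matrix m m 𝕜)
      = 1 := hM.eigenvectorUnitary.2.2
  conv_lhs => rw [hM.spectral_theorem, Unitary.conjStarAlgAut_apply]
  rw [my_charpoly_conj hVW, my_charpoly_diagonal]
  rfl

lemma my_trace_aeval {M : Matrix m m 𝕜} (hM : M.IsHermitian) (q : 𝕜[X]) :
    Matrix.trace (aeval M q) = ∑ i, q.eval ((hM.eigenvalues i : 𝕜)) := by
  have hVW : (hM.eigenvectorUnitary : Matrix m m 𝕜) * star (hM.eigenvectorUnitary : Matrix m m 𝕜)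
      = 1 := hM.eigenvectorUnitary.2.2
  have hWV : star (hM.eigenvectorUnitary : Matrix m m 𝕜) * (hM.eigenvectorUnitary : Matrix m m 𝕜)
      = 1 := hM.eigenvectorUnitary.2.1
  conv_lhs => rw [hM.spectral_theorem, Unitary.conjStarAlgAut_apply, my_aeval_conj hVW hWV, my_aeval_diagonal]
  rw [Matrix.trace_mul_cycle, hWV, Matrix.one_mul, Matrix.trace_diagonal]
  rfl
end H2


lemma my_quadform {N : ℕ} {V B : Matrix (Fin N) (Fin N) ℂ} {d : Fin N → ℂ}
    (hVW : V * star V = 1) (hB : B = V * Matrix.diagonal d * star V) (y : Fin N → ℂ) :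
    star y ⬝ᵥ (B *ᵥ y) = ∑ j, d j * ((Complex.normSq ((star V *ᵥ y) j) : ℂ)) ∧
      star y ⬝ᵥ y = ∑ j, ((Complex.normSq ((star V *ᵥ y) j) : ℂ)) := by
  set b : Fin N → ℂ := star V *ᵥ y with hb
  have hy : V *ᵥ b = y := by
    rw [hb, Matrix.mulVec_mulVec, hVW, Matrix.one_mulVec]
  have h1 : star y ᵥ* V = star b := by
    rw [hb, Matrix.star_mulVec, Matrix.star_eq_conjTranspose, Matrix.conjTranspose_conjTranspose]
  have hnq : ∀ j, (starRingEnd ℂ) (b j) * b j = (Complex.normSq (b j) : ℂ) := by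
    intro j
    rw [mul_comm, Complex.mul_conj]
  constructor
  · have hBy : B *ᵥ y = V *ᵥ (Matrix.diagonal d *ᵥ b) := by
      rw [hB, hb, Matrix.mulVec_mulVec, Matrix.mulVec_mulVec, Matrix.mul_assoc]
    rw [hBy, Matrix.dotProduct_mulVec, h1]
    unfold dotProduct
    refine Finset.sum_congr rfl fun j _ => ?_
    rw [Matrix.mulVec_diagonal]
    simp only [Pi.star_apply, RCLike.star_def]
    rw [← mul_assoc, mul_comm ((starRingEnd ℂ) (b j)) (d j), mul_assoc, hnq j]
  · have h2 : star y ⬝ᵥ y = star y ⬝ᵥ (V *ᵥ b) := by rw [hy]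
    rw [h2, Matrix.dotProduct_mulVec, h1]
    unfold dotProduct
    exact Finset.sum_congr rfl fun j _ => by
      simp only [Pi.star_apply, RCLike.star_def]; exact hnq j


lemma my_exists_root (c : ℕ) (hc : 0 < c) :
    ∃ ζ : ℂ, IsPrimitiveRoot ζ c ∧ (starRingEnd ℂ) ζ = ζ⁻¹ := by
  refine ⟨Complex.exp (2 * Real.pi * I / c), Complex.isPrimitiveRoot_exp c hc.ne', ?_⟩
  have habs : ‖Complex.exp (2 * Real.pi * I / c)‖ = 1 := by
    have : (2 : ℂ) * Real.pi * I / c = (2 * Real.pi / c : ℝ) * I := by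
      push_cast; ring
    rw [this, Complex.norm_exp_ofReal_mul_I]
  have hz0 : Complex.exp (2 * Real.pi * I / c) ≠ 0 := Complex.exp_ne_zero _
  rw [Complex.inv_def, Complex.normSq_eq_norm_sq, habs]
  simp [mul_comm]

lemma my_char_sum {c : ℕ} (hc : 0 < c) {ζ : ℂ} (hζ : IsPrimitiveRoot ζ c)
    (hu : (starRingEnd ℂ) ζ = ζ⁻¹) (a b : ℕ) (ha : a < c) (hb : b < c) :
    ∑ s ∈ Finset.range c, ζ ^ (s * a) * (starRingEnd ℂ) (ζ ^ (s * b))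
      = if a = b then (c : ℂ) else 0 := by
  have hz0 : ζ ≠ 0 := hζ.ne_zero hc.ne'
  have hζc : ζ ^ c = 1 := hζ.pow_eq_one
  set z : ℂ := ζ ^ a * (ζ ^ b)⁻¹ with hzdef
  have hterm : ∀ s, ζ ^ (s * a) * (starRingEnd ℂ) (ζ ^ (s * b)) = z ^ s := by
    intro s
    rw [map_pow, hu, inv_pow, mul_comm s a, mul_comm s b, pow_mul, pow_mul, ← inv_pow, ← mul_pow]
  rw [Finset.sum_congr rfl fun s _ => hterm s]
  rcases eq_or_ne a b with rfl | hab
  · simp only [if_pos rfl]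
    have : z = 1 := mul_inv_cancel₀ (pow_ne_zero _ hz0)
    simp [this]
  · rw [if_neg hab]
    have hz1 : z ≠ 1 := by
      intro h
      apply hab
      refine hζ.pow_inj ha hb ?_
      rwa [hzdef, mul_inv_eq_one₀ (pow_ne_zero _ hz0)] at h
    have hzc : z ^ c = 1 := by
      rw [hzdef, mul_pow, ← inv_pow, ← pow_mul, ← pow_mul, mul_comm a c, mul_comm b c, pow_mul,
        pow_mul, hζc, one_pow, inv_pow, hζc]
      simp
    rw [geom_sum_eq hz1, hzc]
    simp

lemma my_exists_ker {α β : Type*} [Fintype α] [Fintype β]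
    (L : (α → ℂ) →ₗ[ℂ] (β → ℂ)) (h : Fintype.card β < Fintype.card α) :
    ∃ a : α → ℂ, a ≠ 0 ∧ L a = 0 := by
  have h1 := L.finrank_range_add_finrank_ker
  rw [Module.finrank_fintype_fun_eq_card] at h1
  have h2 : Module.finrank ℂ (LinearMap.range L) ≤ Fintype.card β := by
    calc Module.finrank ℂ (LinearMap.range L) ≤ Module.finrank ℂ (β → ℂ) :=
          Submodule.finrank_le _
      _ = Fintype.card β := Module.finrank_fintype_fun_eq_card ℂ
  have h3 : LinearMap.ker L ≠ ⊥ := by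
    intro hbot
    rw [hbot, finrank_bot] at h1
    omega
  obtain ⟨a, ha, ha0⟩ := (Submodule.ne_bot_iff _).mp h3
  exact ⟨a, ha0, ha⟩

lemma my_walk_zero {n k : ℕ} (G : SimpleGraph (Fin n)) [DecidableRel G.Adj] {u v : Fin n}
    (huv : u ≠ v) (hnadj : ¬ (G.power k).Adj u v) {l : ℕ} (hl : l ≤ k) :
    ((G.adjMatrix ℝ) ^ l) u v = 0 := by
  rw [SimpleGraph.adjMatrix_pow_apply_eq_card_walk]
  norm_cast
  rw [Fintype.card_eq_zero_iff]
  constructor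
  rintro ⟨w, hw⟩
  exact hnadj ⟨huv, ⟨w⟩, le_trans (hw ▸ SimpleGraph.dist_le w) hl⟩

lemma my_aeval_entry {m : Type*} [Fintype m] [DecidableEq m] (A : Matrix m m ℝ) (p : ℝ[X])
    {k : ℕ} (hp : p.natDegree ≤ k) (u v : m) :
    (aeval A p) u v = ∑ l ∈ Finset.range (k + 1), p.coeff l * ((A ^ l) u v) := by
  rw [Polynomial.aeval_eq_sum_range' (Nat.lt_succ_of_le hp)]
  rw [Matrix.sum_apply]
  exact Finset.sum_congr rfl fun l _ => by simp [Matrix.smul_apply]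

lemma my_aeval_isSymm {m : Type*} [Fintype m] [DecidableEq m] {A : Matrix m m ℝ}
    (hA : A.IsSymm) (p : ℝ[X]) : (aeval A p).IsSymm := by
  induction p using Polynomial.induction_on' with
  | add f g hf hg => rw [map_add]; exact Matrix.IsSymm.add hf hg
  | monomial i a =>
      rw [aeval_monomial, Algebra.algebraMap_eq_smul_one, smul_mul_assoc, Matrix.one_mul]
      unfold Matrix.IsSymm
      rw [Matrix.transpose_smul, (hA.pow i)]

noncomputable def myDotL {N : ℕ} (w : Fin N → ℂ) : (Fin N → ℂ) →ₗ[ℂ] ℂ where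
  toFun y := w ⬝ᵥ y
  map_add' x y := dotProduct_add w x y
  map_smul' r y := by simp [dotProduct_smul]

@[simp] lemma myDotL_apply {N : ℕ} (w y : Fin N → ℂ) : myDotL w y = w ⬝ᵥ y := rfl

def myExt {N : ℕ} (S : Finset (Fin N)) : ({j // j ∈ S} → ℂ) →ₗ[ℂ] (Fin N → ℂ) where
  toFun a j := if h : j ∈ S then a ⟨j, h⟩ else 0
  map_add' a b := by funext j; by_cases h : j ∈ S <;> simp [h]
  map_smul' r a := by funext j; by_cases h : j ∈ S <;> simp [h]

lemma myExt_mem {N : ℕ} (S : Finset (Fin N)) (a : {j // j ∈ S} → ℂ) {j : Fin N} (h : j ∈ S) :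
    myExt S a j = a ⟨j, h⟩ := dif_pos h

lemma myExt_not_mem {N : ℕ} (S : Finset (Fin N)) (a : {j // j ∈ S} → ℂ) {j : Fin N}
    (h : j ∉ S) : myExt S a j = 0 := dif_neg h

lemma my_core {n c : ℕ} (hcpos : 0 < c)
    {B' : Matrix (Fin n) (Fin n) ℂ} (hB' : B'.IsHermitian)
    (col : Fin n → Fin c) (hB0 : ∀ u v, col u = col v → B' u v = 0)
    (μ tt : ℝ) (htt : tt = -((c : ℝ) - 1) * μ)
    (hJ : (univ.filter fun j => μ < hB'.eigenvalues j).card ≤ 1)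
    (hS : c ≤ (univ.filter fun j => hB'.eigenvalues j < tt).card) :
    False := by
  classical
  set ev : Fin n → ℝ := hB'.eigenvalues with hev
  set S : Finset (Fin n) := univ.filter (fun j => ev j < tt) with hSdef
  set J : Finset (Fin n) := univ.filter (fun j => μ < ev j) with hJdef
  set V : Matrix (Fin n) (Fin n) ℂ := (hB'.eigenvectorUnitary : Matrix (Fin n) (Fin n) ℂ)
    with hVdef
  have hVW : V * star V = 1 := hB'.eigenvectorUnitary.2.2
  have hWV : star V * V = 1 := hB'.eigenvectorUnitary.2.1
  set d : Fin n → ℂ := fun i => ((ev i : ℝ) : ℂ) with hd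
  have hspec : B' = V * Matrix.diagonal d * star V := by
    have := hB'.spectral_theorem
    rw [Unitary.conjStarAlgAut_apply] at this
    exact this
  obtain ⟨ζ, hζ, hu⟩ := my_exists_root c hcpos
  set s0 : Fin c := ⟨0, hcpos⟩ with hs0
  have hz0 : ζ ≠ 0 := hζ.ne_zero hcpos.ne'
  set g : Fin c → Fin n → ℂ := fun s v => ζ ^ ((s : ℕ) * (col v : ℕ)) with hg
  set L : ({j // j ∈ S} → ℂ) →ₗ[ℂ] (({s : Fin c // s ≠ s0} × {j // j ∈ J}) → ℂ) :=
    LinearMap.pi (fun sj =>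
      (myDotL (star (fun v => g sj.1.1 v * V v sj.2.1))) ∘ₗ (Matrix.mulVecLin V) ∘ₗ myExt S)
    with hL
  have hcard : Fintype.card ({s : Fin c // s ≠ s0} × {j // j ∈ J})
      < Fintype.card {j // j ∈ S} := by
    rw [Fintype.card_prod, Fintype.card_coe, Fintype.card_coe]
    have h1 : Fintype.card {s : Fin c // s ≠ s0} = c - 1 := by
      rw [Fintype.card_subtype_compl, Fintype.card_fin, Fintype.card_subtype_eq]
    rw [h1]
    calc (c - 1) * J.card ≤ (c - 1) * 1 := Nat.mul_le_mul_left _ hJ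
      _ = c - 1 := by ring_nf
      _ < c := by omega
      _ ≤ S.card := hS
  obtain ⟨a, ha0, haL⟩ := my_exists_ker L hcard
  set ax : Fin n → ℂ := myExt S a with hax
  set x : Fin n → ℂ := V *ᵥ ax with hx
  have haxS : ∀ j, j ∉ S → ax j = 0 := fun j hj => myExt_not_mem S a hj
  have hax0 : ax ≠ 0 := by
    intro h
    apply ha0
    funext j
    have h2 : ax j.1 = 0 := by rw [h]; rfl
    rwa [hax, myExt_mem S a j.2] at h2
  -- twisted vectors
  set xs : Fin c → Fin n → ℂ := fun s v => (starRingEnd ℂ) (g s v) * x v with hxs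
  have hxs0 : xs s0 = x := by
    funext v
    show (starRingEnd ℂ) (ζ ^ ((s0 : ℕ) * (col v : ℕ))) * x v = x v
    have : (s0 : ℕ) = 0 := rfl
    rw [this, zero_mul, pow_zero, _root_.map_one, one_mul]
  set b : Fin c → Fin n → ℂ := fun s => star V *ᵥ xs s with hb
  have hb0 : b s0 = ax := by
    show star V *ᵥ xs s0 = ax
    rw [hxs0, hx, Matrix.mulVec_mulVec, hWV, Matrix.one_mulVec]
  set Rs : Fin c → ℝ := fun s => ∑ j, ev j * Complex.normSq (b s j) with hRs
  set Ns : Fin c → ℝ := fun s => ∑ j, Complex.normSq (b s j) with hNs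
  have hQs : ∀ s, star (xs s) ⬝ᵥ (B' *ᵥ xs s) = ((Rs s : ℝ) : ℂ) := by
    intro s
    rw [(my_quadform hVW hspec (xs s)).1, hRs]
    push_cast
    rfl
  have hNs' : ∀ s, star (xs s) ⬝ᵥ xs s = ((Ns s : ℝ) : ℂ) := by
    intro s
    rw [(my_quadform hVW hspec (xs s)).2, hNs]
    push_cast
    rfl
  -- unimodularity of g
  have hgu : ∀ s v, g s v * (starRingEnd ℂ) (g s v) = 1 := by
    intro s v
    rw [hg]
    dsimp only
    rw [map_pow, hu, ← mul_pow, mul_inv_cancel₀ hz0, one_pow]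
  have hNconst : ∀ s, Ns s = Ns s0 := by
    intro s
    have h1 : star (xs s) ⬝ᵥ xs s = star (xs s0) ⬝ᵥ xs s0 := by
      rw [hxs0]
      unfold dotProduct
      refine Finset.sum_congr rfl fun v _ => ?_
      show star (xs s v) * xs s v = star (x v) * x v
      simp only [hxs, RCLike.star_def, _root_.map_mul, Complex.conj_conj]
      calc g s v * (starRingEnd ℂ) (x v) * ((starRingEnd ℂ) (g s v) * x v)
          = (g s v * (starRingEnd ℂ) (g s v)) * ((starRingEnd ℂ) (x v) * x v) := by ring
        _ = (starRingEnd ℂ) (x v) * x v := by rw [hgu s v, one_mul]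
    have h2 := (hNs' s).symm.trans (h1.trans (hNs' s0))
    exact_mod_cast h2
  -- character sum
  have hcharsum : ∀ u v : Fin n, (∑ s : Fin c, g s u * (starRingEnd ℂ) (g s v))
      = if col u = col v then (c : ℂ) else 0 := by
    intro u v
    have h2 : ∑ s : Fin c, g s u * (starRingEnd ℂ) (g s v)
        = ∑ sn ∈ Finset.range c,
            ζ ^ (sn * (col u : ℕ)) * (starRingEnd ℂ) (ζ ^ (sn * (col v : ℕ))) := by
      rw [← Fin.sum_univ_eq_sum_range
        (fun sn => ζ ^ (sn * (col u : ℕ)) * (starRingEnd ℂ) (ζ ^ (sn * (col v : ℕ)))) c]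
    rw [h2, my_char_sum hcpos hζ hu _ _ (col u).isLt (col v).isLt]
    rcases eq_or_ne (col u) (col v) with h | h
    · rw [if_pos (by rw [h]), if_pos h]
    · rw [if_neg (fun hh => h (Fin.val_injective hh)), if_neg h]
  -- total sum of quadratic forms is zero
  have hsum0 : ∑ s : Fin c, star (xs s) ⬝ᵥ (B' *ᵥ xs s) = 0 := by
    have expand : ∀ s, star (xs s) ⬝ᵥ (B' *ᵥ xs s)
        = ∑ u, ∑ v, (g s u * (starRingEnd ℂ) (g s v))
            * ((starRingEnd ℂ) (x u) * B' u v * x v) := by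
      intro s
      simp only [Matrix.mulVec, dotProduct, Pi.star_apply, Finset.mul_sum]
      refine Finset.sum_congr rfl fun u _ => Finset.sum_congr rfl fun v _ => ?_
      show star (xs s u) * (B' u v * xs s v) = _
      simp only [hxs, RCLike.star_def, _root_.map_mul, Complex.conj_conj]
      ring
    rw [Finset.sum_congr rfl fun s _ => expand s]
    rw [Finset.sum_comm]
    refine Finset.sum_eq_zero fun u _ => ?_
    rw [Finset.sum_comm]
    refine Finset.sum_eq_zero fun v _ => ?_
    rw [← Finset.sum_mul, hcharsum u v]
    rcases eq_or_ne (col u) (col v) with h | h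
    · rw [hB0 u v h]
      ring
    · rw [if_neg h, zero_mul]
  -- conditions from the kernel
  have hbJ : ∀ (s : Fin c), s ≠ s0 → ∀ j ∈ J, b s j = 0 := by
    intro s hs j hj
    have h1 : L a (⟨⟨s, hs⟩, ⟨j, hj⟩⟩) = 0 := by rw [haL]; rfl
    have h3 : b s j = L a (⟨⟨s, hs⟩, ⟨j, hj⟩⟩) := by
      show (star V *ᵥ xs s) j = _
      rw [hL]
      show _ = (star fun v => g s v * V v j) ⬝ᵥ (V *ᵥ ax)
      rw [← hx]
      simp only [Matrix.mulVec, dotProduct]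
      refine Finset.sum_congr rfl fun v _ => ?_
      show (star V) j v * xs s v = star (g s v * V v j) * x v
      simp only [Matrix.star_apply, RCLike.star_def, hxs, _root_.map_mul, Pi.star_apply]
      ring
    rw [h3, h1]
  -- nonzero coordinate
  obtain ⟨j0, hj0⟩ : ∃ j, ax j ≠ 0 := by
    by_contra h
    push_neg at h
    exact hax0 (funext h)
  have hj0S : j0 ∈ S := by
    by_contra h
    exact hj0 (haxS j0 h)
  -- positivity of the norm
  have hNpos : 0 < Ns s0 := by
    rw [hNs]
    dsimp only
    rw [hb0]
    exact Finset.sum_pos' (fun j _ => Complex.normSq_nonneg _)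
      ⟨j0, Finset.mem_univ _, Complex.normSq_pos.mpr hj0⟩
  -- strict bound for s0
  have hRs0 : Rs s0 < tt * Ns s0 := by
    rw [hRs, hNs]
    dsimp only
    rw [hb0, Finset.mul_sum]
    refine Finset.sum_lt_sum (fun j _ => ?_) ⟨j0, Finset.mem_univ j0, ?_⟩
    · by_cases hjS : j ∈ S
      · have hlt : ev j < tt := by
          rw [hSdef] at hjS
          exact (Finset.mem_filter.mp hjS).2
        exact mul_le_mul_of_nonneg_right hlt.le (Complex.normSq_nonneg _)
      · rw [haxS j hjS]
        simp
    · have hlt : ev j0 < tt := by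
        have := hj0S
        rw [hSdef] at this
        exact (Finset.mem_filter.mp this).2
      exact mul_lt_mul_of_pos_right hlt (Complex.normSq_pos.mpr hj0)
  -- bound for other s
  have hRsle : ∀ s, s ≠ s0 → Rs s ≤ μ * Ns s0 := by
    intro s hs
    have h1 : Rs s ≤ μ * Ns s := by
      rw [hRs, hNs]
      dsimp only
      rw [Finset.mul_sum]
      refine Finset.sum_le_sum fun j _ => ?_
      by_cases hjJ : j ∈ J
      · rw [hbJ s hs j hjJ]
        simp
      · have hle : ev j ≤ μ := by
          rw [hJdef] at hjJ
          simp only [Finset.mem_filter, Finset.mem_univ, true_and, not_lt] at hjJ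
          exact hjJ
        exact mul_le_mul_of_nonneg_right hle (Complex.normSq_nonneg _)
    rwa [hNconst s] at h1
  -- sum of Rs is zero
  have hRsum : ∑ s : Fin c, Rs s = 0 := by
    have h1 : ∑ s : Fin c, ((Rs s : ℝ) : ℂ) = 0 :=
      (Finset.sum_congr rfl fun s _ => (hQs s).symm).trans hsum0
    have h2 : ((∑ s : Fin c, Rs s : ℝ) : ℂ) = 0 := by
      push_cast
      exact h1
    exact_mod_cast h2
  -- assemble the contradiction
  rw [← Finset.add_sum_erase univ Rs (Finset.mem_univ s0)] at hRsum
  have hbound : ∑ s ∈ univ.erase s0, Rs s ≤ ((c - 1 : ℕ) : ℝ) * (μ * Ns s0) := by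
    have hcard' : (univ.erase s0).card = c - 1 := by
      rw [Finset.card_erase_of_mem (Finset.mem_univ s0), Finset.card_univ, Fintype.card_fin]
    calc ∑ s ∈ univ.erase s0, Rs s ≤ ∑ _s ∈ univ.erase s0, μ * Ns s0 :=
          Finset.sum_le_sum fun s hsmem => hRsle s (Finset.ne_of_mem_erase hsmem)
      _ = ((c - 1 : ℕ) : ℝ) * (μ * Ns s0) := by
          rw [Finset.sum_const, hcard', nsmul_eq_mul]
  have htteq : tt * Ns s0 = -(((c : ℝ) - 1)) * (μ * Ns s0) := by
    rw [htt]
    ring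
  have hc1 : ((c - 1 : ℕ) : ℝ) = (c : ℝ) - 1 := by
    rw [Nat.cast_sub hcpos]
    norm_num
  rw [hc1] at hbound
  rw [htteq] at hRs0
  linarith


end SRBhelpers

/-- **Second ratio-type bound for `χ_k` (extension of Haemers' bound).** Let `G` be a
`k`-partially walk-regular graph, `p` a polynomial of degree at most `k` with
`Σᵢ p(λᵢ) = 0`, and let `Φ₁ ≥ ⋯ ≥ Φₙ` be the eigenvalues of `p(A)`. If `Φ₂ > 0`, then
`χ_k(G) ≥ 1 − Φ_{n−χ_k+1}/Φ₂`. -/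
theorem second_ratio_bound_chi_k {n k : ℕ} (hn : 2 ≤ n) (G : SimpleGraph (Fin n))
    [DecidableRel G.Adj]
    (hwr : ∀ l ≤ k, ∀ u v : Fin n,
      ((G.adjMatrix ℝ) ^ l) u u = ((G.adjMatrix ℝ) ^ l) v v)
    (lam : Fin n → ℝ) (hlam : Antitone lam)
    (hchar : (G.adjMatrix ℝ).charpoly = ∏ i, (X - C (lam i)))
    (p : Polynomial ℝ) (hp : p.natDegree ≤ k)
    (htr : ∑ i, p.eval (lam i) = 0)
    (Phi : Fin n → ℝ) (hPhi : Antitone Phi)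
    (hPhichar : (aeval (G.adjMatrix ℝ) p).charpoly = ∏ i, (X - C (Phi i)))
    (hPhi2 : 0 < Phi ⟨1, by omega⟩)
    (c : ℕ) (hc : (G.power k).chromaticNumber = c) (hcpos : 0 < c) (hcn : c ≤ n) :
    1 - Phi ⟨n - c, by omega⟩ / Phi ⟨1, by omega⟩ ≤ (c : ℝ) := by
  classical
  set A : Matrix (Fin n) (Fin n) ℝ := G.adjMatrix ℝ with hA
  have hAsymm : A.IsSymm := SimpleGraph.isSymm_adjMatrix G
  have hAherm : A.IsHermitian := by
    show Aᴴ = A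
    rw [Matrix.conjTranspose_eq_transpose_of_trivial]
    exact hAsymm
  set eva : Fin n → ℝ := hAherm.eigenvalues with heva
  have hAchar2 : A.charpoly = ∏ i, (X - C (eva i)) := by
    have h := my_hermitian_charpoly hAherm
    simpa using h
  have hmlam : Multiset.map lam univ.val = Multiset.map eva univ.val :=
    my_multiset_eq_of_prod_eq (by rw [← hchar, hAchar2])
  have hsumtr : ∀ (f g : Fin n → ℝ),
      Multiset.map f univ.val = Multiset.map g univ.val →
      ∀ q : ℝ → ℝ, ∑ i, q (f i) = ∑ i, q (g i) := by
    intro f g hfg q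
    have h1 : ∀ f : Fin n → ℝ, ∑ i, q (f i) = ((Multiset.map f univ.val).map q).sum := by
      intro f
      rw [Multiset.map_map]
      rfl
    rw [h1, h1, hfg]
  set B : Matrix (Fin n) (Fin n) ℝ := aeval A p with hB
  have htrB : B.trace = 0 := by
    have h0 := my_trace_aeval hAherm p
    have h1 : B.trace = ∑ i, p.eval (eva i) := by simpa using h0
    rw [h1, hsumtr eva lam hmlam.symm (fun x => p.eval x)]
    exact htr
  have hBsymm : B.IsSymm := my_aeval_isSymm hAsymm p
  have hdiagB : ∀ u, B u u = 0 := by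
    intro u
    have hconst : ∀ w : Fin n, B w w = B u u := by
      intro w
      rw [hB, my_aeval_entry A p hp, my_aeval_entry A p hp]
      exact Finset.sum_congr rfl fun l hl => by
        rw [hwr l (Nat.lt_succ_iff.mp (Finset.mem_range.mp hl)) w u]
    have htr2 : B.trace = (n : ℝ) * B u u := by
      have hdt : B.trace = ∑ w : Fin n, B w w := rfl
      rw [hdt, Finset.sum_congr rfl fun w _ => hconst w, Finset.sum_const, Finset.card_univ,
        Fintype.card_fin, nsmul_eq_mul]
    rw [htrB] at htr2
    have hn0 : (n : ℝ) ≠ 0 := by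
      have : (0 : ℝ) < n := by exact_mod_cast Nat.lt_of_lt_of_le Nat.zero_lt_two hn
      exact this.ne'
    rcases mul_eq_zero.mp htr2.symm with h | h
    · exact absurd h hn0
    · exact h
  have hcol : (G.power k).Colorable c :=
    SimpleGraph.chromaticNumber_le_iff_colorable.mp (le_of_eq hc)
  obtain ⟨Co⟩ := hcol
  have hB0 : ∀ u v, Co u = Co v → B u v = 0 := by
    intro u v h
    rcases eq_or_ne u v with rfl | huv
    · exact hdiagB u
    · have hnadj : ¬ (G.power k).Adj u v := fun hadj => (Co.valid hadj) h
      rw [hB, my_aeval_entry A p hp]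
      refine Finset.sum_eq_zero fun l hl => ?_
      rw [my_walk_zero G huv hnadj (Nat.lt_succ_iff.mp (Finset.mem_range.mp hl)), mul_zero]
  set B' : Matrix (Fin n) (Fin n) ℂ := B.map (algebraMap ℝ ℂ) with hB'def
  have hB'herm : B'.IsHermitian := by
    show B'ᴴ = B'
    ext u v
    rw [Matrix.conjTranspose_apply, hB'def, Matrix.map_apply, Matrix.map_apply]
    have hsym : B v u = B u v := by
      have h2 := hBsymm
      rw [Matrix.IsSymm] at h2
      exact congrFun (congrFun h2 u) v
    rw [hsym]
    simp [Complex.conj_ofReal]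
  set ev : Fin n → ℝ := hB'herm.eigenvalues with hev
  have h1 : B'.charpoly = ∏ i, (X - C ((ev i : ℂ))) := my_hermitian_charpoly hB'herm
  have h2 : B'.charpoly = ∏ i, (X - C ((Phi i : ℂ))) := by
    rw [hB'def, Matrix.charpoly_map, hPhichar, Polynomial.map_prod]
    refine Finset.prod_congr rfl fun i _ => ?_
    rw [Polynomial.map_sub, Polynomial.map_X, Polynomial.map_C]
    norm_num
  have hmev : Multiset.map Phi univ.val = Multiset.map ev univ.val := by
    have h3 := my_multiset_eq_of_prod_eq (h2.symm.trans h1)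
    have h4 : Multiset.map (Complex.ofReal) (Multiset.map Phi univ.val)
        = Multiset.map (Complex.ofReal) (Multiset.map ev univ.val) := by
      rw [Multiset.map_map, Multiset.map_map]
      exact h3
    exact Multiset.map_injective Complex.ofReal_injective h4
  have hcount : ∀ (q : ℝ → Prop) (_ : DecidablePred q),
      (univ.filter (fun i => q (Phi i))).card = (univ.filter (fun j => q (ev j))).card := by
    intro q hq
    have h5 : ∀ f : Fin n → ℝ, (univ.filter (fun i : Fin n => q (f i))).card
        = Multiset.countP q (Multiset.map f univ.val) := by
      intro f
      rw [Multiset.countP_map]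
      rfl
    rw [h5 Phi, h5 ev, hmev]
  have hcore : -((c : ℝ) - 1) * Phi ⟨1, by omega⟩ ≤ Phi ⟨n - c, by omega⟩ := by
    by_contra hcon
    push_neg at hcon
    set μ : ℝ := Phi ⟨1, by omega⟩ with hμ
    set tt : ℝ := -((c : ℝ) - 1) * μ with htt
    have hJ : (univ.filter fun j => μ < ev j).card ≤ 1 := by
      rw [← hcount (fun x => μ < x) (fun x => inferInstance)]
      have hsub : (univ.filter fun i => μ < Phi i) ⊆ {(⟨0, by omega⟩ : Fin n)} := by
        intro i hi
        rw [Finset.mem_filter] at hi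
        rw [Finset.mem_singleton]
        by_contra hne
        have h1le : (⟨1, by omega⟩ : Fin n) ≤ i := by
          rw [Fin.le_def]
          have hiv : i.val ≠ 0 := fun h0 => hne (Fin.ext h0)
          show 1 ≤ i.val
          omega
        exact absurd (hPhi h1le) (not_le.mpr hi.2)
      calc (univ.filter fun i => μ < Phi i).card ≤ ({(⟨0, by omega⟩ : Fin n)} : Finset _).card :=
            Finset.card_le_card hsub
        _ = 1 := Finset.card_singleton _
    have hS : c ≤ (univ.filter fun j => ev j < tt).card := by
      rw [← hcount (fun x => x < tt) (fun x => inferInstance)]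
      have hsub : Finset.Ici (⟨n - c, by omega⟩ : Fin n) ⊆ univ.filter (fun i => Phi i < tt) := by
        intro i hi
        rw [Finset.mem_Ici] at hi
        rw [Finset.mem_filter]
        exact ⟨Finset.mem_univ _, lt_of_le_of_lt (hPhi hi) hcon⟩
      calc c = (Finset.Ici (⟨n - c, by omega⟩ : Fin n)).card := by
            rw [Fin.card_Ici]
            show c = n - (n - c)
            omega
        _ ≤ _ := Finset.card_le_card hsub
    exact my_core hcpos hB'herm Co
      (fun u v h => by rw [hB'def, Matrix.map_apply, hB0 u v h, map_zero]) μ tt htt hJ hS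
  have hstep : ((1 : ℝ) - c) ≤ Phi ⟨n - c, by omega⟩ / Phi ⟨1, by omega⟩ := by
    rw [le_div_iff₀ hPhi2]
    calc ((1 : ℝ) - c) * Phi ⟨1, by omega⟩ = -((c : ℝ) - 1) * Phi ⟨1, by omega⟩ := by ring
      _ ≤ _ := hcore
  linarith [hstep]
end
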